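/- arXiv:2011.05929 — 3 statements merged into one kernel-verified Lean document; each statement's English description precedes it below -/
import Mathlib

section
/- Let J be uniformly distributed on {1,...,n} and independent of (S, R, X^n, Y^n). Setting V = (X_1,...,X_{J-1}, Y_{J+1},...,Y_n, R, J) and U = (S, V), it holds that I(S;X^n|R) - I(S;Y^n|R) = n·[ I(U;X_J|V) - I(U;Y_J|V) ]. -/
set_option synthInstance.maxSize 512
set_option maxHeartbeats 1000000

open Real Finset

namespace CRG

variable {Ω : Type*} [Fintype Ω]

/-- Probability that the random variable `X` takes the value `x`, under the pmf `p` on `Ω`. -/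
noncomputable def pr {α : Type*} [DecidableEq α] (p : Ω → ℝ) (X : Ω → α) (x : α) : ℝ :=
  ∑ ω, if X ω = x then p ω else 0

/-- Shannon entropy (in nats) of the random variable `X` under the pmf `p`. -/
noncomputable def ent {α : Type*} [Fintype α] [DecidableEq α] (p : Ω → ℝ) (X : Ω → α) : ℝ :=
  ∑ x, Real.negMulLog (pr p X x)

/-- Conditional entropy `H(X|Y)`. -/
noncomputable def condEnt {α β : Type*} [Fintype α] [DecidableEq α] [Fintype β] [DecidableEq β]
    (p : Ω → ℝ) (X : Ω → α) (Y : Ω → β) : ℝ :=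
  ent p (fun ω => (X ω, Y ω)) - ent p Y

/-- Mutual information `I(X;Y)`. -/
noncomputable def mi {α β : Type*} [Fintype α] [DecidableEq α] [Fintype β] [DecidableEq β]
    (p : Ω → ℝ) (X : Ω → α) (Y : Ω → β) : ℝ :=
  ent p X + ent p Y - ent p (fun ω => (X ω, Y ω))

/-- Conditional mutual information `I(X;Y|Z)`. -/
noncomputable def cmi {α β γ : Type*} [Fintype α] [DecidableEq α] [Fintype β] [DecidableEq β]
    [Fintype γ] [DecidableEq γ] (p : Ω → ℝ) (X : Ω → α) (Y : Ω → β) (Z : Ω → γ) : ℝ :=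
  condEnt p X Z + condEnt p Y Z - condEnt p (fun ω => (X ω, Y ω)) Z

/-- `A` and `C` are conditionally independent given `B` (equivalently, the Markov chain
`A — B — C` holds). -/
def CondIndep {α β γ : Type*} [DecidableEq α] [DecidableEq β] [DecidableEq γ]
    (p : Ω → ℝ) (A : Ω → α) (B : Ω → β) (C : Ω → γ) : Prop :=
  ∀ a b c, pr p (fun ω => (A ω, B ω, C ω)) (a, b, c) * pr p B b =
    pr p (fun ω => (A ω, B ω)) (a, b) * pr p (fun ω => (B ω, C ω)) (b, c)

end CRG

open CRG

/-- The auxiliary random variable `V = (X_1,…,X_{J-1}, Y_{J+1},…,Y_n, R, J)`, where the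
variable-length prefix/suffix is encoded by masking the irrelevant coordinates by `none`. -/
def maskV {Ω α β ρ : Type*} {n : ℕ} (X : Fin n → Ω → α) (Y : Fin n → Ω → β)
    (R : Ω → ρ) (J : Ω → Fin n) (ω : Ω) :
    (Fin n → Option α) × (Fin n → Option β) × ρ × Fin n :=
  ((fun j => if j < J ω then some (X j ω) else none),
   (fun j => if J ω < j then some (Y j ω) else none), R ω, J ω)

namespace CRGAux
open CRG

variable {Ω : Type*} [Fintype Ω]

lemma pr_comp {μ γ : Type*} [Fintype μ] [DecidableEq μ] [DecidableEq γ]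
    (p : Ω → ℝ) (M : Ω → μ) (φ : μ → γ) (a : γ) :
    pr p (fun ω => φ (M ω)) a = ∑ m, if φ m = a then pr p M m else 0 := by
  unfold pr
  have h : ∀ m : μ, (if φ m = a then ∑ ω, if M ω = m then p ω else 0 else 0)
      = ∑ ω, if M ω = m ∧ φ m = a then p ω else 0 := by
    intro m
    split
    · apply Finset.sum_congr rfl; intro ω _; simp_all
    · symm; apply Finset.sum_eq_zero; intro ω _; simp_all
  simp only [h]
  rw [Finset.sum_comm]
  apply Finset.sum_congr rfl; intro ω _
  rw [Finset.sum_eq_single (M ω)]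
  · simp
  · intro m _ hm; simp [Ne.symm hm]
  · simp

lemma pr_sum {γ : Type*} [Fintype γ] [DecidableEq γ] (p : Ω → ℝ) (X : Ω → γ) :
    ∑ a, pr p X a = ∑ ω, p ω := by
  unfold pr
  rw [Finset.sum_comm]
  apply Finset.sum_congr rfl; intro ω _
  simp

lemma pr_comp_inj_apply {γ δ : Type*} [DecidableEq γ] [DecidableEq δ]
    (p : Ω → ℝ) (X : Ω → γ) (φ : γ → δ) (hφ : Function.Injective φ) (x : γ) :
    pr p (fun ω => φ (X ω)) (φ x) = pr p X x := by
  unfold pr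
  apply Finset.sum_congr rfl; intro ω _
  simp [hφ.eq_iff]

lemma ent_comp_inj {γ δ : Type*} [Fintype γ] [DecidableEq γ] [Fintype δ] [DecidableEq δ]
    (p : Ω → ℝ) (X : Ω → γ) (φ : γ → δ) (hφ : Function.Injective φ) :
    ent p (fun ω => φ (X ω)) = ent p X := by
  unfold ent
  rw [← Finset.sum_subset (Finset.subset_univ (Finset.univ.image φ))]
  · rw [Finset.sum_image (fun x _ y _ h => hφ h)]
    apply Finset.sum_congr rfl; intro x _
    rw [pr_comp_inj_apply p X φ hφ]
  · intro y _ hy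
    have h0 : pr p (fun ω => φ (X ω)) y = 0 := by
      unfold pr
      apply Finset.sum_eq_zero; intro ω _
      rw [if_neg]
      intro h
      exact hy (Finset.mem_image.2 ⟨X ω, Finset.mem_univ _, h⟩)
    simp [h0]

lemma ent_eq_of_fn {γ δ : Type*} [Fintype γ] [DecidableEq γ] [Fintype δ] [DecidableEq δ]
    (p : Ω → ℝ) (A : Ω → γ) (B : Ω → δ) (g : γ → δ) (h : δ → γ)
    (hg : ∀ ω, g (A ω) = B ω) (hh : ∀ ω, h (B ω) = A ω) :
    ent p A = ent p B := by
  have h1 : ent p (fun ω => (A ω, B ω)) = ent p A := by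
    have := ent_comp_inj p A (fun a => (a, g a))
      (fun a b hab => congrArg Prod.fst hab)
    rw [← this]
    apply congrArg; funext ω; simp [hg ω]
  have h2 : ent p (fun ω => (B ω, A ω)) = ent p B := by
    have := ent_comp_inj p B (fun b => (b, h b))
      (fun a b hab => congrArg Prod.fst hab)
    rw [← this]
    apply congrArg; funext ω; simp [hh ω]
  have h3 : ent p (fun ω => (B ω, A ω)) = ent p (fun ω => (A ω, B ω)) := by
    exact ent_comp_inj p (fun ω => (A ω, B ω)) Prod.swap Prod.swap_injective
  rw [← h1, ← h3, h2]


lemma ent_mix {μ δ : Type*} [Fintype μ] [DecidableEq μ] [Fintype δ] [DecidableEq δ]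
    (p : Ω → ℝ) (hp1 : ∑ ω, p ω = 1) {n : ℕ} (hn : 0 < n)
    (J : Ω → Fin n) (M : Ω → μ)
    (hJM : ∀ (k : Fin n) (m : μ), pr p (fun ω => (J ω, M ω)) (k, m) = (1 / (n:ℝ)) * pr p M m)
    (B : Fin n → μ → δ) :
    ent p (fun ω => (B (J ω) (M ω), J ω))
      = Real.log n + (1 / (n:ℝ)) * ∑ j, ent p (fun ω => B j (M ω)) := by
  have hnR : (n : ℝ) ≠ 0 := Nat.cast_ne_zero.2 hn.ne'
  have key : ∀ (j : Fin n) (b : δ),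
      pr p (fun ω => (B (J ω) (M ω), J ω)) (b, j)
        = (1 / (n:ℝ)) * pr p (fun ω => B j (M ω)) b := by
    intro j b
    have h1 := pr_comp p (fun ω => (J ω, M ω)) (fun x => (B x.1 x.2, x.1)) (b, j)
    simp only at h1
    rw [h1, pr_comp p M (B j) b, Finset.mul_sum, Fintype.sum_prod_type]
    rw [Finset.sum_eq_single j]
    · apply Finset.sum_congr rfl; intro m _
      rw [hJM j m]
      by_cases hb : B j m = b
      · simp [hb]
      · simp [hb, Prod.ext_iff]
    · intro k _ hk
      apply Finset.sum_eq_zero; intro m _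
      rw [if_neg]; simp [Prod.ext_iff]; intro _; exact hk
    · simp
  unfold ent
  rw [Fintype.sum_prod_type_right]
  have hrow : ∀ j : Fin n,
      (∑ b, Real.negMulLog (pr p (fun ω => (B (J ω) (M ω), J ω)) (b, j)))
        = (1 / (n:ℝ)) * Real.log n + (1 / (n:ℝ)) * ent p (fun ω => B j (M ω)) := by
    intro j
    have hq1 : ∑ b, pr p (fun ω => B j (M ω)) b = 1 := by rw [pr_sum, hp1]
    calc (∑ b, Real.negMulLog (pr p (fun ω => (B (J ω) (M ω), J ω)) (b, j)))
        = ∑ b, ((pr p (fun ω => B j (M ω)) b) * Real.negMulLog (1 / (n:ℝ))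
            + (1 / (n:ℝ)) * Real.negMulLog (pr p (fun ω => B j (M ω)) b)) := by
          apply Finset.sum_congr rfl; intro b _
          rw [key j b, Real.negMulLog_mul]
      _ = (1 / (n:ℝ)) * Real.log n + (1 / (n:ℝ)) * ent p (fun ω => B j (M ω)) := by
          rw [Finset.sum_add_distrib, ← Finset.sum_mul, hq1, ← Finset.mul_sum]
          unfold ent
          congr 1
          rw [one_mul]
          unfold Real.negMulLog
          rw [Real.log_div one_ne_zero hnR, Real.log_one]
          ring
  rw [Finset.sum_congr rfl (fun j _ => hrow j), Finset.sum_add_distrib,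
    Finset.sum_const, ← Finset.mul_sum]
  simp only [Finset.card_univ, Fintype.card_fin, nsmul_eq_mul]
  field_simp


  rfl

lemma ent_mix' {μ δ γ : Type*} [Fintype μ] [DecidableEq μ] [Fintype δ] [DecidableEq δ]
    [Fintype γ] [DecidableEq γ]
    (p : Ω → ℝ) (hp1 : ∑ ω, p ω = 1) {n : ℕ} (hn : 0 < n)
    (J : Ω → Fin n) (M : Ω → μ)
    (hJM : ∀ (k : Fin n) (m : μ), pr p (fun ω => (J ω, M ω)) (k, m) = (1 / (n:ℝ)) * pr p M m)
    (B : Fin n → μ → δ) (T : Ω → γ)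
    (φ : δ × Fin n → γ) (ψ : γ → δ × Fin n) (hψ : ∀ x, ψ (φ x) = x)
    (hT : ∀ ω, T ω = φ (B (J ω) (M ω), J ω)) :
    ent p T = Real.log n + (1 / (n:ℝ)) * ∑ j, ent p (fun ω => B j (M ω)) := by
  have h : T = fun ω => φ ((fun ω => (B (J ω) (M ω), J ω)) ω) := funext hT
  rw [h, ent_comp_inj p _ φ (Function.LeftInverse.injective hψ), ent_mix p hp1 hn J M hJM B]

end CRGAux

open CRGAux

section Main
set_option linter.unusedSectionVars false
variable {Ω α β σA ρ : Type*} [Fintype Ω]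
    [Fintype α] [DecidableEq α] [Fintype β] [DecidableEq β]
    [Fintype σA] [DecidableEq σA] [Fintype ρ] [DecidableEq ρ]
variable (n : ℕ)

abbrev MT (σA ρ α β : Type*) (n : ℕ) := σA × ρ × (Fin n → α) × (Fin n → β)

def Fv (k : ℕ) (m : MT σA ρ α β n) : (Fin n → Option α) × (Fin n → Option β) × ρ :=
  ((fun i => if (i : ℕ) < k then some (m.2.2.1 i) else none),
   (fun i => if k ≤ (i : ℕ) then some (m.2.2.2 i) else none), m.2.1)

def Gv (k : ℕ) (m : MT σA ρ α β n) : σA × (Fin n → Option α) × (Fin n → Option β) × ρ :=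
  (m.1, Fv n k m)

def B1 (j : Fin n) (m : MT σA ρ α β n) :
    α × (Fin n → Option α) × (Fin n → Option β) × ρ :=
  (m.2.2.1 j, (fun i => if i < j then some (m.2.2.1 i) else none),
   (fun i => if j < i then some (m.2.2.2 i) else none), m.2.1)

def B2 (j : Fin n) (m : MT σA ρ α β n) :
    σA × α × (Fin n → Option α) × (Fin n → Option β) × ρ :=
  (m.1, B1 n j m)

def B3 (j : Fin n) (m : MT σA ρ α β n) :
    β × (Fin n → Option α) × (Fin n → Option β) × ρ :=
  (m.2.2.2 j, (fun i => if i < j then some (m.2.2.1 i) else none),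
   (fun i => if j < i then some (m.2.2.2 i) else none), m.2.1)

def B4 (j : Fin n) (m : MT σA ρ α β n) :
    σA × β × (Fin n → Option α) × (Fin n → Option β) × ρ :=
  (m.1, B3 n j m)

def g1 (j : Fin n) (b : α × (Fin n → Option α) × (Fin n → Option β) × ρ) :
    (Fin n → Option α) × (Fin n → Option β) × ρ :=
  ((fun i => if (i:ℕ) < (j:ℕ) then b.2.1 i else if i = j then some b.1 else none),
   b.2.2.1, b.2.2.2)

def h1 (a₀ : α) (j : Fin n) (c : (Fin n → Option α) × (Fin n → Option β) × ρ) :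
    α × (Fin n → Option α) × (Fin n → Option β) × ρ :=
  ((c.1 j).getD a₀, (fun i => if i < j then c.1 i else none), c.2.1, c.2.2)

def g3 (j : Fin n) (b : β × (Fin n → Option α) × (Fin n → Option β) × ρ) :
    (Fin n → Option α) × (Fin n → Option β) × ρ :=
  (b.2.1, (fun i => if i = j then some b.1 else b.2.2.1 i), b.2.2.2)

def h3 (b₀ : β) (j : Fin n) (c : (Fin n → Option α) × (Fin n → Option β) × ρ) :
    β × (Fin n → Option α) × (Fin n → Option β) × ρ :=
  ((c.2.1 j).getD b₀, (fun i => if i < j then c.1 i else none),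
   (fun i => if j < i then c.2.1 i else none), c.2.2)

lemma hg1 (j : Fin n) (m : MT σA ρ α β n) : g1 n j (B1 n j m) = Fv n ((j:ℕ)+1) m := by
  obtain ⟨s, r, xs, ys⟩ := m
  refine Prod.ext ?_ (Prod.ext ?_ rfl)
  · funext i
    simp only [B1, Fv, g1, Fin.lt_def]
    by_cases hlt : (i:ℕ) < (j:ℕ)
    · simp [hlt, Nat.lt_succ_of_lt hlt]
    · by_cases h2 : i = j
      · subst h2; simp [hlt, Nat.lt_succ_self]
      · have h4 : ¬ (i:ℕ) < (j:ℕ)+1 := by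
          have : (i:ℕ) ≠ (j:ℕ) := fun hc => h2 (Fin.ext hc)
          omega
        simp [hlt, h2, h4]
  · funext i
    simp only [B1, Fv, g1, Fin.lt_def]
    refine if_congr ?_ rfl rfl
    omega

lemma hh1 (a₀ : α) (j : Fin n) (m : MT σA ρ α β n) :
    h1 n a₀ j (Fv n ((j:ℕ)+1) m) = B1 n j m := by
  obtain ⟨s, r, xs, ys⟩ := m
  refine Prod.ext ?_ (Prod.ext ?_ (Prod.ext ?_ rfl))
  · simp [Fv, B1, h1, Nat.lt_succ_self]
  · funext i
    simp only [Fv, B1, h1, Fin.lt_def]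
    by_cases hlt : (i:ℕ) < (j:ℕ)
    · simp [hlt, Nat.lt_succ_of_lt hlt]
    · simp [hlt]
  · funext i
    simp only [Fv, B1, h1, Fin.lt_def]
    refine if_congr ?_ rfl rfl
    omega

lemma hg3 (j : Fin n) (m : MT σA ρ α β n) : g3 n j (B3 n j m) = Fv n (j:ℕ) m := by
  obtain ⟨s, r, xs, ys⟩ := m
  refine Prod.ext ?_ (Prod.ext ?_ rfl)
  · funext i
    simp only [B3, Fv, g3, Fin.lt_def]
  · funext i
    simp only [B3, Fv, g3, Fin.lt_def]
    by_cases h2 : i = j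
    · subst h2; simp
    · have h4 : (i:ℕ) ≠ (j:ℕ) := fun hc => h2 (Fin.ext hc)
      by_cases hlt : (j:ℕ) < (i:ℕ)
      · simp [h2, hlt, Nat.le_of_lt hlt]
      · have : ¬ (j:ℕ) ≤ (i:ℕ) := by omega
        simp [h2, hlt, this]

lemma hh3 (b₀ : β) (j : Fin n) (m : MT σA ρ α β n) :
    h3 n b₀ j (Fv n (j:ℕ) m) = B3 n j m := by
  obtain ⟨s, r, xs, ys⟩ := m
  refine Prod.ext ?_ (Prod.ext ?_ (Prod.ext ?_ rfl))
  · simp [Fv, B3, h3]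
  · funext i
    simp only [Fv, B3, h3, Fin.lt_def]
    by_cases hlt : (i:ℕ) < (j:ℕ) <;> simp [hlt]
  · funext i
    simp only [Fv, B3, h3, Fin.lt_def]
    by_cases hlt : (j:ℕ) < (i:ℕ)
    · simp [hlt, Nat.le_of_lt hlt]
    · simp [hlt]

variable (p : Ω → ℝ) (M : Ω → MT σA ρ α β n)

lemma ent_B1 (a₀ : α) (j : Fin n) :
    ent p (fun ω => B1 n j (M ω)) = ent p (fun ω => Fv n ((j:ℕ)+1) (M ω)) :=
  ent_eq_of_fn p _ _ (g1 n j) (h1 n a₀ j) (fun ω => hg1 n j (M ω)) (fun ω => hh1 n a₀ j (M ω))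

lemma ent_B2 (a₀ : α) (j : Fin n) :
    ent p (fun ω => B2 n j (M ω)) = ent p (fun ω => Gv n ((j:ℕ)+1) (M ω)) := by
  apply ent_eq_of_fn p _ _ (Prod.map id (g1 n j)) (Prod.map id (h1 n a₀ j))
  · intro ω; exact Prod.ext rfl (hg1 n j (M ω))
  · intro ω; exact Prod.ext rfl (hh1 n a₀ j (M ω))

lemma ent_B3 (b₀ : β) (j : Fin n) :
    ent p (fun ω => B3 n j (M ω)) = ent p (fun ω => Fv n (j:ℕ) (M ω)) :=
  ent_eq_of_fn p _ _ (g3 n j) (h3 n b₀ j) (fun ω => hg3 n j (M ω)) (fun ω => hh3 n b₀ j (M ω))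

lemma ent_B4 (b₀ : β) (j : Fin n) :
    ent p (fun ω => B4 n j (M ω)) = ent p (fun ω => Gv n (j:ℕ) (M ω)) := by
  apply ent_eq_of_fn p _ _ (Prod.map id (g3 n j)) (Prod.map id (h3 n b₀ j))
  · intro ω; exact Prod.ext rfl (hg3 n j (M ω))
  · intro ω; exact Prod.ext rfl (hh3 n b₀ j (M ω))


lemma ent_Fv_top (a₀ : α) :
    ent p (fun ω => Fv n n (M ω)) = ent p (fun ω => ((M ω).2.2.1, (M ω).2.1)) := by
  apply ent_eq_of_fn p _ _
    (fun c : (Fin n → Option α) × (Fin n → Option β) × ρ =>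
      ((fun i => (c.1 i).getD a₀, c.2.2) : (Fin n → α) × ρ))
    (fun d : (Fin n → α) × ρ =>
      (((fun i => some (d.1 i)), (fun _ => none), d.2) :
        (Fin n → Option α) × (Fin n → Option β) × ρ))
  · intro ω
    refine Prod.ext ?_ rfl
    funext i
    simp [Fv, i.is_lt]
  · intro ω
    refine Prod.ext ?_ (Prod.ext ?_ rfl) <;> funext i <;>
      simp [Fv, i.is_lt, Nat.not_le.2 i.is_lt]

lemma ent_Fv_bot (b₀ : β) :
    ent p (fun ω => Fv n 0 (M ω)) = ent p (fun ω => ((M ω).2.2.2, (M ω).2.1)) := by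
  apply ent_eq_of_fn p _ _
    (fun c : (Fin n → Option α) × (Fin n → Option β) × ρ =>
      ((fun i => (c.2.1 i).getD b₀, c.2.2) : (Fin n → β) × ρ))
    (fun d : (Fin n → β) × ρ =>
      (((fun _ => none), (fun i => some (d.1 i)), d.2) :
        (Fin n → Option α) × (Fin n → Option β) × ρ))
  · intro ω
    refine Prod.ext ?_ rfl
    funext i
    simp [Fv]
  · intro ω
    refine Prod.ext ?_ (Prod.ext ?_ rfl) <;> funext i <;> simp [Fv]

lemma ent_Gv_top (a₀ : α) :
    ent p (fun ω => Gv n n (M ω)) = ent p (fun ω => (((M ω).1, (M ω).2.2.1), (M ω).2.1)) := by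
  apply ent_eq_of_fn p _ _
    (fun c : σA × (Fin n → Option α) × (Fin n → Option β) × ρ =>
      (((c.1, fun i => (c.2.1 i).getD a₀), c.2.2.2) : (σA × (Fin n → α)) × ρ))
    (fun d : (σA × (Fin n → α)) × ρ =>
      ((d.1.1, (fun i => some (d.1.2 i)), (fun _ => none), d.2) :
        σA × (Fin n → Option α) × (Fin n → Option β) × ρ))
  · intro ω
    refine Prod.ext (Prod.ext rfl ?_) rfl
    funext i
    simp [Gv, Fv, i.is_lt]
  · intro ω
    refine Prod.ext rfl (Prod.ext ?_ (Prod.ext ?_ rfl)) <;> funext i <;>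
      simp [Gv, Fv, i.is_lt, Nat.not_le.2 i.is_lt]

lemma ent_Gv_bot (b₀ : β) :
    ent p (fun ω => Gv n 0 (M ω)) = ent p (fun ω => (((M ω).1, (M ω).2.2.2), (M ω).2.1)) := by
  apply ent_eq_of_fn p _ _
    (fun c : σA × (Fin n → Option α) × (Fin n → Option β) × ρ =>
      (((c.1, fun i => (c.2.2.1 i).getD b₀), c.2.2.2) : (σA × (Fin n → β)) × ρ))
    (fun d : (σA × (Fin n → β)) × ρ =>
      ((d.1.1, (fun _ => none), (fun i => some (d.1.2 i)), d.2) :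
        σA × (Fin n → Option α) × (Fin n → Option β) × ρ))
  · intro ω
    refine Prod.ext (Prod.ext rfl ?_) rfl
    funext i
    simp [Gv, Fv]
  · intro ω
    refine Prod.ext rfl (Prod.ext ?_ (Prod.ext ?_ rfl)) <;> funext i <;> simp [Gv, Fv]

end Main

set_option synthInstance.maxSize 4096
set_option synthInstance.maxHeartbeats 1000000

/-- if `J` is uniform on `{1,…,n}` and independent of `(S,R,X^n,Y^n)`,
`V = (X^{J-1}, Y_{J+1}^n, R, J)` and `U = (S,V)`, then
`I(S;X^n|R) - I(S;Y^n|R) = n·[I(U;X_J|V) - I(U;Y_J|V)]`. -/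
theorem single_letterization {Ω α β σA ρ : Type*} [Fintype Ω]
    [Fintype α] [DecidableEq α] [Fintype β] [DecidableEq β]
    [Fintype σA] [DecidableEq σA] [Fintype ρ] [DecidableEq ρ]
    (p : Ω → ℝ) (hp : ∀ ω, 0 ≤ p ω) (hp1 : ∑ ω, p ω = 1)
    (n : ℕ) (S : Ω → σA) (R : Ω → ρ) (X : Fin n → Ω → α) (Y : Fin n → Ω → β)
    (J : Ω → Fin n)
    (hJ : ∀ (k : Fin n) (s : σA) (r : ρ) (xs : Fin n → α) (ys : Fin n → β),
      pr p (fun ω => (J ω, S ω, R ω, (fun j => X j ω), fun j => Y j ω)) (k, s, r, xs, ys) =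
        (1 / (n : ℝ)) *
          pr p (fun ω => (S ω, R ω, (fun j => X j ω), fun j => Y j ω)) (s, r, xs, ys)) :
    cmi p S (fun ω (j : Fin n) => X j ω) R - cmi p S (fun ω (j : Fin n) => Y j ω) R =
      (n : ℝ) *
        (cmi p (fun ω => (S ω, maskV X Y R J ω)) (fun ω => X (J ω) ω) (maskV X Y R J)
          - cmi p (fun ω => (S ω, maskV X Y R J ω)) (fun ω => Y (J ω) ω) (maskV X Y R J)) := by

  have hOm : Nonempty Ω := by
    by_contra h
    rw [not_nonempty_iff] at h
    rw [Finset.univ_eq_empty, Finset.sum_empty] at hp1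
    exact one_ne_zero hp1.symm
  obtain ⟨ω₀⟩ := hOm
  have hn : 0 < n := (J ω₀).pos
  have hnR : (n : ℝ) ≠ 0 := Nat.cast_ne_zero.2 hn.ne'
  have a₀ : α := X ⟨0, hn⟩ ω₀
  have b₀ : β := Y ⟨0, hn⟩ ω₀
  set M : Ω → MT σA ρ α β n := fun ω => (S ω, R ω, (fun j => X j ω), fun j => Y j ω) with hM
  have hJM : ∀ (k : Fin n) (m : MT σA ρ α β n),
      pr p (fun ω => (J ω, M ω)) (k, m) = (1 / (n:ℝ)) * pr p M m := by
    rintro k ⟨s, r, xs, ys⟩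
    exact hJ k s r xs ys
  have e1 : ent p (fun ω => (X (J ω) ω, maskV X Y R J ω))
      = Real.log n + (1 / (n:ℝ)) * ∑ j : Fin n, ent p (fun ω => Fv n ((j:ℕ)+1) (M ω)) := by
    have h := ent_mix' p hp1 hn J M hJM (B1 n)
      (fun ω => (X (J ω) ω, maskV X Y R J ω))
      (fun bj : (α × (Fin n → Option α) × (Fin n → Option β) × ρ) × Fin n =>
        (bj.1.1, (bj.1.2.1, bj.1.2.2.1, bj.1.2.2.2, bj.2)))
      (fun t => ((t.1, t.2.1, t.2.2.1, t.2.2.2.1), t.2.2.2.2))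
      (fun x => rfl) (fun ω => rfl)
    rw [h]
    congr 1
    apply congrArg
    exact Finset.sum_congr rfl (fun j _ => ent_B1 n p M a₀ j)
  have e2 : ent p (fun ω => (((S ω, maskV X Y R J ω), X (J ω) ω), maskV X Y R J ω))
      = Real.log n + (1 / (n:ℝ)) * ∑ j : Fin n, ent p (fun ω => Gv n ((j:ℕ)+1) (M ω)) := by
    have h := ent_mix' p hp1 hn J M hJM (B2 n)
      (fun ω => (((S ω, maskV X Y R J ω), X (J ω) ω), maskV X Y R J ω))
      (fun bj : (σA × α × (Fin n → Option α) × (Fin n → Option β) × ρ) × Fin n =>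
        (((bj.1.1, (bj.1.2.2.1, bj.1.2.2.2.1, bj.1.2.2.2.2, bj.2)), bj.1.2.1),
         (bj.1.2.2.1, bj.1.2.2.2.1, bj.1.2.2.2.2, bj.2)))
      (fun t => ((t.1.1.1, t.1.2, t.2.1, t.2.2.1, t.2.2.2.1), t.2.2.2.2))
      (fun x => rfl) (fun ω => rfl)
    rw [h]
    congr 1
    apply congrArg
    exact Finset.sum_congr rfl (fun j _ => ent_B2 n p M a₀ j)
  have e3 : ent p (fun ω => (Y (J ω) ω, maskV X Y R J ω))
      = Real.log n + (1 / (n:ℝ)) * ∑ j : Fin n, ent p (fun ω => Fv n (j:ℕ) (M ω)) := by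
    have h := ent_mix' p hp1 hn J M hJM (B3 n)
      (fun ω => (Y (J ω) ω, maskV X Y R J ω))
      (fun bj : (β × (Fin n → Option α) × (Fin n → Option β) × ρ) × Fin n =>
        (bj.1.1, (bj.1.2.1, bj.1.2.2.1, bj.1.2.2.2, bj.2)))
      (fun t => ((t.1, t.2.1, t.2.2.1, t.2.2.2.1), t.2.2.2.2))
      (fun x => rfl) (fun ω => rfl)
    rw [h]
    congr 1
    apply congrArg
    exact Finset.sum_congr rfl (fun j _ => ent_B3 n p M b₀ j)
  have e4 : ent p (fun ω => (((S ω, maskV X Y R J ω), Y (J ω) ω), maskV X Y R J ω))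
      = Real.log n + (1 / (n:ℝ)) * ∑ j : Fin n, ent p (fun ω => Gv n (j:ℕ) (M ω)) := by
    have h := ent_mix' p hp1 hn J M hJM (B4 n)
      (fun ω => (((S ω, maskV X Y R J ω), Y (J ω) ω), maskV X Y R J ω))
      (fun bj : (σA × β × (Fin n → Option α) × (Fin n → Option β) × ρ) × Fin n =>
        (((bj.1.1, (bj.1.2.2.1, bj.1.2.2.2.1, bj.1.2.2.2.2, bj.2)), bj.1.2.1),
         (bj.1.2.2.1, bj.1.2.2.2.1, bj.1.2.2.2.2, bj.2)))
      (fun t => ((t.1.1.1, t.1.2, t.2.1, t.2.2.1, t.2.2.2.1), t.2.2.2.2))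
      (fun x => rfl) (fun ω => rfl)
    rw [h]
    congr 1
    apply congrArg
    exact Finset.sum_congr rfl (fun j _ => ent_B4 n p M b₀ j)
  have hFn : ent p (fun ω => ((fun j => X j ω), R ω)) = ent p (fun ω => Fv n n (M ω)) :=
    (ent_Fv_top n p M a₀).symm
  have hF0 : ent p (fun ω => ((fun j => Y j ω), R ω)) = ent p (fun ω => Fv n 0 (M ω)) :=
    (ent_Fv_bot n p M b₀).symm
  have hGn : ent p (fun ω => ((S ω, fun j => X j ω), R ω)) = ent p (fun ω => Gv n n (M ω)) :=
    (ent_Gv_top n p M a₀).symm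
  have hG0 : ent p (fun ω => ((S ω, fun j => Y j ω), R ω)) = ent p (fun ω => Gv n 0 (M ω)) :=
    (ent_Gv_bot n p M b₀).symm
  have tX : ∑ j : Fin n, ent p (fun ω => Fv n ((j:ℕ)+1) (M ω))
      - ∑ j : Fin n, ent p (fun ω => Fv n (j:ℕ) (M ω))
      = ent p (fun ω => Fv n n (M ω)) - ent p (fun ω => Fv n 0 (M ω)) := by
    rw [← Finset.sum_sub_distrib]
    rw [Fin.sum_univ_eq_sum_range
      (fun k => ent p (fun ω => Fv n (k+1) (M ω)) - ent p (fun ω => Fv n k (M ω)))]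
    exact Finset.sum_range_sub (fun k => ent p (fun ω => Fv n k (M ω))) n
  have tY : ∑ j : Fin n, ent p (fun ω => Gv n ((j:ℕ)+1) (M ω))
      - ∑ j : Fin n, ent p (fun ω => Gv n (j:ℕ) (M ω))
      = ent p (fun ω => Gv n n (M ω)) - ent p (fun ω => Gv n 0 (M ω)) := by
    rw [← Finset.sum_sub_distrib]
    rw [Fin.sum_univ_eq_sum_range
      (fun k => ent p (fun ω => Gv n (k+1) (M ω)) - ent p (fun ω => Gv n k (M ω)))]
    exact Finset.sum_range_sub (fun k => ent p (fun ω => Gv n k (M ω))) n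
  simp only [cmi, condEnt]
  rw [e1, e2, e3, e4, hFn, hF0, hGn, hG0]
  field_simp
  linarith [tX, tY]
end

section
/- Combining the converse steps: if K = Φ(X^n), L = Ψ(Y^n, Z^n), Pr[K≠L] ≤ ε, |K| ≤ e^{cn}, the channel from T^n to Z^n is memoryless with per-letter mutual information at most C, and Y^n — (X^n,K) — T^n — Z^n forms a Markov chain, then I(K;X^n) - I(K;Y^n) = H(K) - I(K;Y^n) = H(K|Y^n) ≤ n·C + 1 + ε·c·n. -/
set_option synthInstance.maxSize 512
set_option maxHeartbeats 1000000

open Real Finset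

open CRG


noncomputable section

namespace CRG

def Sv {Ω ζ : Type*} {n : ℕ} (Z : Fin n → Ω → ζ) (i : ℕ) : Ω → (Fin n → Option ζ) :=
  fun ω j => if (j : ℕ) < i then some (Z j ω) else none

namespace Aux

variable {Ω : Type*} [Fintype Ω] {α β γ : Type*} (p : Ω → ℝ)



lemma pr_nonneg [DecidableEq α] (hp : ∀ ω, 0 ≤ p ω) (X : Ω → α) (x : α) : 0 ≤ pr p X x := by
  refine Finset.sum_nonneg fun ω _ => ?_
  split <;> simp [hp ω]

lemma sum_pr [Fintype α] [DecidableEq α] (X : Ω → α) : ∑ x, pr p X x = ∑ ω, p ω := by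
  unfold pr
  rw [Finset.sum_comm]
  refine Finset.sum_congr rfl fun ω _ => ?_
  simp [Finset.sum_ite_eq' Finset.univ (X ω) (fun _ => p ω)]

lemma pr_comp [Fintype α] [DecidableEq α] [DecidableEq β] (f : α → β) (X : Ω → α) (y : β) :
    pr p (fun ω => f (X ω)) y = ∑ x, if f x = y then pr p X x else 0 := by
  unfold pr
  have h : ∀ x : α, (if f x = y then (∑ ω, if X ω = x then p ω else 0) else 0)
      = ∑ ω, if X ω = x ∧ f x = y then p ω else 0 := by
    intro x; split_ifs with h <;> simp [h]
  simp only [h]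
  rw [Finset.sum_comm]
  refine Finset.sum_congr rfl fun ω _ => ?_
  rw [Finset.sum_eq_single (X ω)]
  · simp
  · intro b _ hb; simp [Ne.symm hb]
  · simp

lemma pr_comp_inj [DecidableEq α] [DecidableEq β] (f : α → β) (hf : Function.Injective f)
    (X : Ω → α) (x : α) : pr p (fun ω => f (X ω)) (f x) = pr p X x := by
  unfold pr
  refine Finset.sum_congr rfl fun ω _ => ?_
  simp [hf.eq_iff]

lemma pr_comp_eq_zero [DecidableEq α] [DecidableEq β] (f : α → β) (X : Ω → α) (y : β)
    (hy : ∀ x, f x ≠ y) : pr p (fun ω => f (X ω)) y = 0 := by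
  unfold pr
  refine Finset.sum_eq_zero fun ω _ => by simp [hy (X ω)]

lemma pr_le_pr_comp [DecidableEq α] [DecidableEq β] (hp : ∀ ω, 0 ≤ p ω) (f : α → β)
    (X : Ω → α) (x : α) : pr p X x ≤ pr p (fun ω => f (X ω)) (f x) := by
  unfold pr
  refine Finset.sum_le_sum fun ω _ => ?_
  by_cases h : X ω = x
  · simp [h]
  · simp only [h, if_false]
    split <;> simp [hp ω]

lemma ent_comp_inj [Fintype α] [DecidableEq α] [Fintype β] [DecidableEq β]
    (f : α → β) (hf : Function.Injective f) (X : Ω → α) :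
    ent p (fun ω => f (X ω)) = ent p X := by
  unfold ent
  rw [← Finset.sum_subset (Finset.subset_univ (Finset.univ.image f))]
  · rw [Finset.sum_image (fun a _ b _ h => hf h)]
    refine Finset.sum_congr rfl fun x _ => ?_
    rw [pr_comp_inj p f hf X x]
  · intro y _ hy
    rw [pr_comp_eq_zero p f X y, Real.negMulLog_zero]
    intro x hx
    exact hy (Finset.mem_image.mpr ⟨x, Finset.mem_univ x, hx⟩)

lemma ent_congr [Fintype α] [DecidableEq α] [Fintype β] [DecidableEq β]
    (X : Ω → α) (Y : Ω → β) (g : α → β) (h : β → α)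
    (hg : ∀ ω, Y ω = g (X ω)) (hh : ∀ ω, X ω = h (Y ω)) :
    ent p X = ent p Y := by
  have h1 : ent p (fun ω => (X ω, Y ω)) = ent p X := by
    have : (fun ω => (X ω, Y ω)) = fun ω => ((fun x => (x, g x)) (X ω)) := by
      funext ω; simp [hg ω]
    rw [this]
    exact ent_comp_inj p (fun x => (x, g x)) (fun a b hab => congrArg Prod.fst hab) X
  have h2 : ent p (fun ω => (X ω, Y ω)) = ent p Y := by
    have : (fun ω => (X ω, Y ω)) = fun ω => ((fun y => (h y, y)) (Y ω)) := by
      funext ω; simp [hh ω]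
    rw [this]
    exact ent_comp_inj p (fun y => (h y, y)) (fun a b hab => congrArg Prod.snd hab) Y
  rw [← h1, h2]

lemma ent_comp_eq_sum [Fintype α] [DecidableEq α] [Fintype β] [DecidableEq β]
    (f : α → β) (X : Ω → α) :
    ent p (fun ω => f (X ω)) = -∑ x, pr p X x * Real.log (pr p (fun ω => f (X ω)) (f x)) := by
  have key : ∀ y : β, Real.negMulLog (pr p (fun ω => f (X ω)) y)
      = ∑ x, (if f x = y then -(pr p X x * Real.log (pr p (fun ω => f (X ω)) y)) else 0) := by
    intro y
    rw [Real.negMulLog]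
    set L := Real.log (pr p (fun ω => f (X ω)) y) with hL
    rw [pr_comp p f X y, neg_mul, Finset.sum_mul, ← Finset.sum_neg_distrib]
    refine Finset.sum_congr rfl fun x _ => ?_
    split_ifs <;> ring
  unfold ent
  simp only [key]
  rw [Finset.sum_comm, ← Finset.sum_neg_distrib]
  refine Finset.sum_congr rfl fun x _ => ?_
  rw [Finset.sum_ite_eq Finset.univ (f x)
    (fun y => -(pr p X x * Real.log (pr p (fun ω => f (X ω)) y)))]
  simp

lemma ent_eq_sum [Fintype α] [DecidableEq α] (X : Ω → α) :
    ent p X = -∑ x, pr p X x * Real.log (pr p X x) := by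
  unfold ent
  rw [← Finset.sum_neg_distrib]
  exact Finset.sum_congr rfl fun x _ => by rw [Real.negMulLog]; ring

lemma sum_pr_pair_fst [Fintype α] [DecidableEq α] [Fintype β] [DecidableEq β]
    (A : Ω → α) (B : Ω → β) (b : β) :
    ∑ a, pr p (fun ω => (A ω, B ω)) (a, b) = pr p B b := by
  unfold pr
  rw [Finset.sum_comm]
  refine Finset.sum_congr rfl fun ω _ => ?_
  rw [Finset.sum_eq_single (A ω)]
  · by_cases h : B ω = b <;> simp [h, Prod.ext_iff]
  · intro c _ hc; simp [Prod.ext_iff, Ne.symm hc]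
  · simp

lemma sum_mul_log_div_le {ι : Type*} (s : Finset ι) (a b : ι → ℝ)
    (ha : ∀ i ∈ s, 0 ≤ a i) (hb : ∀ i ∈ s, 0 ≤ b i)
    (hab : ∀ i ∈ s, a i ≠ 0 → b i ≠ 0) :
    ∑ i ∈ s, a i * Real.log (b i / a i) ≤ (∑ i ∈ s, b i) - ∑ i ∈ s, a i := by
  rw [← Finset.sum_sub_distrib]
  refine Finset.sum_le_sum fun i hi => ?_
  rcases eq_or_lt_of_le (ha i hi) with h0 | h0
  · simp [← h0, hb i hi]
  · have hbpos : 0 < b i := lt_of_le_of_ne (hb i hi) (Ne.symm (hab i hi (ne_of_gt h0)))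
    have hd : 0 < b i / a i := div_pos hbpos h0
    have := Real.log_le_sub_one_of_pos hd
    calc a i * Real.log (b i / a i) ≤ a i * (b i / a i - 1) := by
          exact mul_le_mul_of_nonneg_left this (le_of_lt h0)
      _ = b i - a i := by field_simp





lemma ent_pair_ge_right [Fintype α] [DecidableEq α] [Fintype β] [DecidableEq β]
    (hp : ∀ ω, 0 ≤ p ω) (A : Ω → α) (B : Ω → β) :
    ent p B ≤ ent p (fun ω => (A ω, B ω)) := by
  have hB : ent p B = -∑ w : α × β, pr p (fun ω => (A ω, B ω)) w * Real.log (pr p B w.2) :=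
    ent_comp_eq_sum p Prod.snd (fun ω => (A ω, B ω))
  have hW : ent p (fun ω => (A ω, B ω)) = -∑ w : α × β,
      pr p (fun ω => (A ω, B ω)) w * Real.log (pr p (fun ω => (A ω, B ω)) w) :=
    ent_eq_sum p _
  rw [hB, hW]
  apply neg_le_neg
  refine Finset.sum_le_sum fun w _ => ?_
  rcases eq_or_lt_of_le (pr_nonneg p hp (fun ω => (A ω, B ω)) w) with h0 | h0
  · simp [← h0]
  · have hle : pr p (fun ω => (A ω, B ω)) w ≤ pr p B w.2 :=
      pr_le_pr_comp p hp Prod.snd (fun ω => (A ω, B ω)) w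
    exact mul_le_mul_of_nonneg_left (Real.log_le_log h0 hle) h0.le

lemma ent_pair_ge_left [Fintype α] [DecidableEq α] [Fintype β] [DecidableEq β]
    (hp : ∀ ω, 0 ≤ p ω) (A : Ω → α) (B : Ω → β) :
    ent p A ≤ ent p (fun ω => (A ω, B ω)) := by
  have hA : ent p A = -∑ w : α × β, pr p (fun ω => (A ω, B ω)) w * Real.log (pr p A w.1) :=
    ent_comp_eq_sum p Prod.fst (fun ω => (A ω, B ω))
  have hW : ent p (fun ω => (A ω, B ω)) = -∑ w : α × β,
      pr p (fun ω => (A ω, B ω)) w * Real.log (pr p (fun ω => (A ω, B ω)) w) :=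
    ent_eq_sum p _
  rw [hA, hW]
  apply neg_le_neg
  refine Finset.sum_le_sum fun w _ => ?_
  rcases eq_or_lt_of_le (pr_nonneg p hp (fun ω => (A ω, B ω)) w) with h0 | h0
  · simp [← h0]
  · have hle : pr p (fun ω => (A ω, B ω)) w ≤ pr p A w.1 :=
      pr_le_pr_comp p hp Prod.fst (fun ω => (A ω, B ω)) w
    exact mul_le_mul_of_nonneg_left (Real.log_le_log h0 hle) h0.le

lemma ent_comp_le [Fintype α] [DecidableEq α] [Fintype β] [DecidableEq β]
    (hp : ∀ ω, 0 ≤ p ω) (f : α → β) (X : Ω → α) :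
    ent p (fun ω => f (X ω)) ≤ ent p X := by
  have h1 := ent_pair_ge_right p hp X (fun ω => f (X ω))
  have h2 : ent p (fun ω => (X ω, f (X ω))) = ent p X :=
    ent_congr p _ X Prod.fst (fun x => (x, f x)) (fun ω => rfl) (fun ω => rfl)
  linarith

lemma ent_pair_le_add [Fintype α] [DecidableEq α] [Fintype β] [DecidableEq β]
    (hp : ∀ ω, 0 ≤ p ω) (hp1 : ∑ ω, p ω = 1) (A : Ω → α) (B : Ω → β) :
    ent p (fun ω => (A ω, B ω)) ≤ ent p A + ent p B := by
  set W := fun ω => (A ω, B ω) with hWdef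
  have hA : ent p A = -∑ w : α × β, pr p W w * Real.log (pr p A w.1) :=
    ent_comp_eq_sum p Prod.fst W
  have hB : ent p B = -∑ w : α × β, pr p W w * Real.log (pr p B w.2) :=
    ent_comp_eq_sum p Prod.snd W
  have hW : ent p W = -∑ w : α × β, pr p W w * Real.log (pr p W w) := ent_eq_sum p W
  have hqA : ∀ w : α × β, pr p W w ≤ pr p A w.1 := fun w => pr_le_pr_comp p hp Prod.fst W w
  have hqB : ∀ w : α × β, pr p W w ≤ pr p B w.2 := fun w => pr_le_pr_comp p hp Prod.snd W w
  have key : ∀ w : α × β,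
      pr p W w * Real.log (pr p W w) - pr p W w * Real.log (pr p A w.1)
        - pr p W w * Real.log (pr p B w.2)
      = -(pr p W w * Real.log ((pr p A w.1 * pr p B w.2) / pr p W w)) := by
    intro w
    rcases eq_or_lt_of_le (pr_nonneg p hp W w) with h0 | h0
    · simp [← h0]
    · have hA0 : 0 < pr p A w.1 := lt_of_lt_of_le h0 (hqA w)
      have hB0 : 0 < pr p B w.2 := lt_of_lt_of_le h0 (hqB w)
      rw [Real.log_div (by positivity) h0.ne', Real.log_mul hA0.ne' hB0.ne']
      ring
  have hkl := sum_mul_log_div_le Finset.univ (pr p W)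
      (fun w => pr p A w.1 * pr p B w.2)
      (fun w _ => pr_nonneg p hp W w)
      (fun w _ => mul_nonneg (pr_nonneg p hp A _) (pr_nonneg p hp B _))
      (fun w _ hq => by
        have h0 : 0 < pr p W w := lt_of_le_of_ne (pr_nonneg p hp W w) (Ne.symm hq)
        have hA0 : 0 < pr p A w.1 := lt_of_lt_of_le h0 (hqA w)
        have hB0 : 0 < pr p B w.2 := lt_of_lt_of_le h0 (hqB w)
        positivity)
  have hsa : ∑ w : α × β, pr p W w = 1 := (sum_pr p W).trans hp1
  have hsb : ∑ w : α × β, pr p A w.1 * pr p B w.2 = 1 := by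
    rw [Fintype.sum_prod_type]
    rw [← Finset.sum_mul_sum Finset.univ Finset.univ (fun a => pr p A a) (fun b => pr p B b)]
    rw [sum_pr p A, sum_pr p B, hp1, one_mul]
  have hsplit : ∑ w : α × β, (pr p W w * Real.log (pr p W w)
        - pr p W w * Real.log (pr p A w.1) - pr p W w * Real.log (pr p B w.2))
      = -∑ w : α × β, pr p W w * Real.log ((pr p A w.1 * pr p B w.2) / pr p W w) := by
    rw [← Finset.sum_neg_distrib]
    exact Finset.sum_congr rfl fun w _ => key w
  rw [Finset.sum_sub_distrib, Finset.sum_sub_distrib] at hsplit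
  rw [hA, hB, hW]
  linarith




lemma ent_submodular [Fintype α] [DecidableEq α] [Fintype β] [DecidableEq β]
    [Fintype γ] [DecidableEq γ]
    (hp : ∀ ω, 0 ≤ p ω) (hp1 : ∑ ω, p ω = 1) (X : Ω → α) (Y : Ω → β) (Z : Ω → γ) :
    ent p (fun ω => (X ω, Y ω, Z ω)) + ent p Z
      ≤ ent p (fun ω => (X ω, Z ω)) + ent p (fun ω => (Y ω, Z ω)) := by
  have hW : ent p (fun ω => (X ω, Y ω, Z ω)) = -∑ w : α × β × γ,
      pr p (fun ω => (X ω, Y ω, Z ω)) w * Real.log (pr p (fun ω => (X ω, Y ω, Z ω)) w) :=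
    ent_eq_sum p _
  have hZ0 := ent_comp_eq_sum p (fun w : α × β × γ => w.2.2) (fun ω => (X ω, Y ω, Z ω))
  have hZ : ent p Z = -∑ w : α × β × γ,
      pr p (fun ω => (X ω, Y ω, Z ω)) w * Real.log (pr p Z w.2.2) := hZ0
  have hXZ0 := ent_comp_eq_sum p (fun w : α × β × γ => (w.1, w.2.2)) (fun ω => (X ω, Y ω, Z ω))
  have hXZ : ent p (fun ω => (X ω, Z ω)) = -∑ w : α × β × γ,
      pr p (fun ω => (X ω, Y ω, Z ω)) w
        * Real.log (pr p (fun ω => (X ω, Z ω)) (w.1, w.2.2)) := hXZ0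
  have hYZ0 := ent_comp_eq_sum p (fun w : α × β × γ => (w.2.1, w.2.2)) (fun ω => (X ω, Y ω, Z ω))
  have hYZ : ent p (fun ω => (Y ω, Z ω)) = -∑ w : α × β × γ,
      pr p (fun ω => (X ω, Y ω, Z ω)) w
        * Real.log (pr p (fun ω => (Y ω, Z ω)) (w.2.1, w.2.2)) := hYZ0
  clear hZ0 hXZ0 hYZ0
  set b : α × β × γ → ℝ := fun w =>
    pr p (fun ω => (X ω, Z ω)) (w.1, w.2.2) * pr p (fun ω => (Y ω, Z ω)) (w.2.1, w.2.2)
      / pr p Z w.2.2 with hbdef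
  have hq0 : ∀ w : α × β × γ, 0 ≤ pr p (fun ω => (X ω, Y ω, Z ω)) w :=
    fun w => pr_nonneg p hp _ w
  have hqXZ : ∀ w : α × β × γ, pr p (fun ω => (X ω, Y ω, Z ω)) w
      ≤ pr p (fun ω => (X ω, Z ω)) (w.1, w.2.2) :=
    fun w => pr_le_pr_comp p hp (fun w => (w.1, w.2.2)) (fun ω => (X ω, Y ω, Z ω)) w
  have hqYZ : ∀ w : α × β × γ, pr p (fun ω => (X ω, Y ω, Z ω)) w
      ≤ pr p (fun ω => (Y ω, Z ω)) (w.2.1, w.2.2) :=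
    fun w => pr_le_pr_comp p hp (fun w => (w.2.1, w.2.2)) (fun ω => (X ω, Y ω, Z ω)) w
  have hqZ : ∀ w : α × β × γ, pr p (fun ω => (X ω, Y ω, Z ω)) w ≤ pr p Z w.2.2 :=
    fun w => pr_le_pr_comp p hp (fun w => w.2.2) (fun ω => (X ω, Y ω, Z ω)) w
  have key : ∀ w : α × β × γ,
      pr p (fun ω => (X ω, Y ω, Z ω)) w * Real.log (pr p (fun ω => (X ω, Y ω, Z ω)) w)
        + pr p (fun ω => (X ω, Y ω, Z ω)) w * Real.log (pr p Z w.2.2)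
        - pr p (fun ω => (X ω, Y ω, Z ω)) w
            * Real.log (pr p (fun ω => (X ω, Z ω)) (w.1, w.2.2))
        - pr p (fun ω => (X ω, Y ω, Z ω)) w
            * Real.log (pr p (fun ω => (Y ω, Z ω)) (w.2.1, w.2.2))
      = -(pr p (fun ω => (X ω, Y ω, Z ω)) w
            * Real.log (b w / pr p (fun ω => (X ω, Y ω, Z ω)) w)) := by
    intro w
    rcases eq_or_lt_of_le (hq0 w) with h0 | h0
    · simp [← h0]
    · have h1 : 0 < pr p (fun ω => (X ω, Z ω)) (w.1, w.2.2) := lt_of_lt_of_le h0 (hqXZ w)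
      have h2 : 0 < pr p (fun ω => (Y ω, Z ω)) (w.2.1, w.2.2) := lt_of_lt_of_le h0 (hqYZ w)
      have h3 : 0 < pr p Z w.2.2 := lt_of_lt_of_le h0 (hqZ w)
      rw [hbdef]
      simp only
      rw [div_div, Real.log_div (by positivity) (by positivity),
        Real.log_mul h1.ne' h2.ne', Real.log_mul h3.ne' h0.ne']
      ring
  have hkl := sum_mul_log_div_le Finset.univ (pr p (fun ω => (X ω, Y ω, Z ω))) b
      (fun w _ => hq0 w)
      (fun w _ => by
        have u1 := pr_nonneg p hp (fun ω => (X ω, Z ω)) (w.1, w.2.2)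
        have u2 := pr_nonneg p hp (fun ω => (Y ω, Z ω)) (w.2.1, w.2.2)
        have u3 := pr_nonneg p hp Z w.2.2
        rw [hbdef]; positivity)
      (fun w _ hq => by
        have h0 : 0 < pr p (fun ω => (X ω, Y ω, Z ω)) w :=
          lt_of_le_of_ne (hq0 w) (Ne.symm hq)
        have h1 : 0 < pr p (fun ω => (X ω, Z ω)) (w.1, w.2.2) := lt_of_lt_of_le h0 (hqXZ w)
        have h2 : 0 < pr p (fun ω => (Y ω, Z ω)) (w.2.1, w.2.2) := lt_of_lt_of_le h0 (hqYZ w)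
        have h3 : 0 < pr p Z w.2.2 := lt_of_lt_of_le h0 (hqZ w)
        rw [hbdef]; positivity)
  have hsa : ∑ w : α × β × γ, pr p (fun ω => (X ω, Y ω, Z ω)) w = 1 := (sum_pr p _).trans hp1
  have hstep : ∀ v : β × γ, (∑ x : α, b (x, v)) ≤ pr p (fun ω => (Y ω, Z ω)) v := by
    intro v
    rcases eq_or_lt_of_le (pr_nonneg p hp Z v.2) with h0 | h0
    · have hz : ∀ x : α, pr p (fun ω => (X ω, Z ω)) (x, v.2) = 0 := by
        intro x
        have h1 : pr p (fun ω => (X ω, Z ω)) (x, v.2) ≤ pr p Z v.2 :=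
          pr_le_pr_comp p hp Prod.snd (fun ω => (X ω, Z ω)) (x, v.2)
        have h2 := pr_nonneg p hp (fun ω => (X ω, Z ω)) (x, v.2)
        rw [← h0] at h1
        linarith
      have hzz : (∑ x : α, b (x, v)) = 0 := by
        refine Finset.sum_eq_zero fun x _ => ?_
        rw [hbdef]; simp [hz x]
      rw [hzz]
      exact pr_nonneg p hp _ v
    · have hee : (∑ x : α, b (x, v)) = pr p (fun ω => (Y ω, Z ω)) v := by
        rw [hbdef]
        simp only
        rw [← Finset.sum_div, ← Finset.sum_mul]
        rw [show (∑ x : α, pr p (fun ω => (X ω, Z ω)) (x, v.2)) = pr p Z v.2 from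
          sum_pr_pair_fst p X Z v.2]
        field_simp
      rw [hee]
  have hsb : (∑ w : α × β × γ, b w) ≤ 1 := by
    rw [Fintype.sum_prod_type, Finset.sum_comm]
    calc ∑ v : β × γ, ∑ x : α, b (x, v) ≤ ∑ v : β × γ, pr p (fun ω => (Y ω, Z ω)) v :=
          Finset.sum_le_sum fun v _ => hstep v
      _ = 1 := (sum_pr p _).trans hp1
  have hsplit : ∑ w : α × β × γ,
        (pr p (fun ω => (X ω, Y ω, Z ω)) w * Real.log (pr p (fun ω => (X ω, Y ω, Z ω)) w)
        + pr p (fun ω => (X ω, Y ω, Z ω)) w * Real.log (pr p Z w.2.2)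
        - pr p (fun ω => (X ω, Y ω, Z ω)) w
            * Real.log (pr p (fun ω => (X ω, Z ω)) (w.1, w.2.2))
        - pr p (fun ω => (X ω, Y ω, Z ω)) w
            * Real.log (pr p (fun ω => (Y ω, Z ω)) (w.2.1, w.2.2)))
      = -∑ w : α × β × γ, pr p (fun ω => (X ω, Y ω, Z ω)) w
          * Real.log (b w / pr p (fun ω => (X ω, Y ω, Z ω)) w) := by
    rw [← Finset.sum_neg_distrib]
    exact Finset.sum_congr rfl fun w _ => key w
  rw [Finset.sum_sub_distrib, Finset.sum_sub_distrib, Finset.sum_add_distrib] at hsplit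
  rw [hW, hZ, hXZ, hYZ]
  linarith





lemma condIndep_ent [Fintype α] [DecidableEq α] [Fintype β] [DecidableEq β]
    [Fintype γ] [DecidableEq γ]
    (hp : ∀ ω, 0 ≤ p ω) (A : Ω → α) (B : Ω → β) (C : Ω → γ)
    (h : CondIndep p A B C) :
    ent p (fun ω => (A ω, B ω, C ω)) + ent p B
      = ent p (fun ω => (A ω, B ω)) + ent p (fun ω => (B ω, C ω)) := by
  have hW : ent p (fun ω => (A ω, B ω, C ω)) = -∑ w : α × β × γ,
      pr p (fun ω => (A ω, B ω, C ω)) w * Real.log (pr p (fun ω => (A ω, B ω, C ω)) w) :=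
    ent_eq_sum p _
  have hB0 := ent_comp_eq_sum p (fun w : α × β × γ => w.2.1) (fun ω => (A ω, B ω, C ω))
  have hB : ent p B = -∑ w : α × β × γ,
      pr p (fun ω => (A ω, B ω, C ω)) w * Real.log (pr p B w.2.1) := hB0
  have hAB0 := ent_comp_eq_sum p (fun w : α × β × γ => (w.1, w.2.1)) (fun ω => (A ω, B ω, C ω))
  have hAB : ent p (fun ω => (A ω, B ω)) = -∑ w : α × β × γ,
      pr p (fun ω => (A ω, B ω, C ω)) w
        * Real.log (pr p (fun ω => (A ω, B ω)) (w.1, w.2.1)) := hAB0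
  have hBC0 := ent_comp_eq_sum p (fun w : α × β × γ => w.2) (fun ω => (A ω, B ω, C ω))
  have hBC : ent p (fun ω => (B ω, C ω)) = -∑ w : α × β × γ,
      pr p (fun ω => (A ω, B ω, C ω)) w
        * Real.log (pr p (fun ω => (B ω, C ω)) w.2) := hBC0
  clear hB0 hAB0 hBC0
  have hq0 : ∀ w : α × β × γ, 0 ≤ pr p (fun ω => (A ω, B ω, C ω)) w :=
    fun w => pr_nonneg p hp _ w
  have hqB : ∀ w : α × β × γ, pr p (fun ω => (A ω, B ω, C ω)) w ≤ pr p B w.2.1 :=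
    fun w => pr_le_pr_comp p hp (fun w => w.2.1) (fun ω => (A ω, B ω, C ω)) w
  have hqAB : ∀ w : α × β × γ, pr p (fun ω => (A ω, B ω, C ω)) w
      ≤ pr p (fun ω => (A ω, B ω)) (w.1, w.2.1) :=
    fun w => pr_le_pr_comp p hp (fun w => (w.1, w.2.1)) (fun ω => (A ω, B ω, C ω)) w
  have hqBC : ∀ w : α × β × γ, pr p (fun ω => (A ω, B ω, C ω)) w
      ≤ pr p (fun ω => (B ω, C ω)) w.2 :=
    fun w => pr_le_pr_comp p hp (fun w => w.2) (fun ω => (A ω, B ω, C ω)) w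
  have key : ∀ w : α × β × γ,
      pr p (fun ω => (A ω, B ω, C ω)) w * Real.log (pr p (fun ω => (A ω, B ω, C ω)) w)
        + pr p (fun ω => (A ω, B ω, C ω)) w * Real.log (pr p B w.2.1)
      = pr p (fun ω => (A ω, B ω, C ω)) w
            * Real.log (pr p (fun ω => (A ω, B ω)) (w.1, w.2.1))
        + pr p (fun ω => (A ω, B ω, C ω)) w
            * Real.log (pr p (fun ω => (B ω, C ω)) w.2) := by
    intro w
    rcases eq_or_lt_of_le (hq0 w) with h0 | h0
    · simp [← h0]
    · have h1 : 0 < pr p (fun ω => (A ω, B ω)) (w.1, w.2.1) := lt_of_lt_of_le h0 (hqAB w)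
      have h2 : 0 < pr p B w.2.1 := lt_of_lt_of_le h0 (hqB w)
      have heq : pr p (fun ω => (A ω, B ω, C ω)) w * pr p B w.2.1
          = pr p (fun ω => (A ω, B ω)) (w.1, w.2.1) * pr p (fun ω => (B ω, C ω)) w.2 :=
        h w.1 w.2.1 w.2.2
      have h3 : 0 < pr p (fun ω => (B ω, C ω)) w.2 := by
        rcases eq_or_lt_of_le (pr_nonneg p hp (fun ω => (B ω, C ω)) w.2) with h4 | h4
        · rw [← h4, mul_zero] at heq
          nlinarith
        · exact h4
      have hlog := congrArg Real.log heq
      rw [Real.log_mul h0.ne' h2.ne', Real.log_mul h1.ne' h3.ne'] at hlog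
      nlinarith [hlog]
  have hsum : ∑ w : α × β × γ,
      (pr p (fun ω => (A ω, B ω, C ω)) w * Real.log (pr p (fun ω => (A ω, B ω, C ω)) w)
        + pr p (fun ω => (A ω, B ω, C ω)) w * Real.log (pr p B w.2.1))
      = ∑ w : α × β × γ,
      (pr p (fun ω => (A ω, B ω, C ω)) w
            * Real.log (pr p (fun ω => (A ω, B ω)) (w.1, w.2.1))
        + pr p (fun ω => (A ω, B ω, C ω)) w
            * Real.log (pr p (fun ω => (B ω, C ω)) w.2)) :=
    Finset.sum_congr rfl fun w _ => key w
  rw [Finset.sum_add_distrib, Finset.sum_add_distrib] at hsum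
  rw [hW, hB, hAB, hBC]
  linarith

lemma ent_le_cross [Fintype α] [DecidableEq α]
    (hp : ∀ ω, 0 ≤ p ω) (hp1 : ∑ ω, p ω = 1) (X : Ω → α) (b : α → ℝ)
    (hb : ∀ x, 0 < b x) (hsb : ∑ x, b x ≤ 1) :
    ent p X ≤ ∑ x, pr p X x * (-Real.log (b x)) := by
  have hkl := sum_mul_log_div_le Finset.univ (pr p X) b
    (fun x _ => pr_nonneg p hp X x) (fun x _ => (hb x).le) (fun x _ _ => (hb x).ne')
  have hsa : ∑ x, pr p X x = 1 := (sum_pr p X).trans hp1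
  have key : ∀ x, pr p X x * Real.log (b x / pr p X x)
      = pr p X x * (-Real.log (b x))⁻¹ * 0 + pr p X x * Real.log (b x)
        - pr p X x * Real.log (pr p X x) := by
    intro x
    rcases eq_or_lt_of_le (pr_nonneg p hp X x) with h0 | h0
    · simp [← h0]
    · rw [Real.log_div (hb x).ne' h0.ne']; ring
  have hsplit : ∑ x, pr p X x * Real.log (b x / pr p X x)
      = ∑ x, (pr p X x * Real.log (b x) - pr p X x * Real.log (pr p X x)) := by
    refine Finset.sum_congr rfl fun x _ => ?_
    rw [key x]; ring
  rw [Finset.sum_sub_distrib] at hsplit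
  have hent : ent p X = -∑ x, pr p X x * Real.log (pr p X x) := ent_eq_sum p X
  have hrhs : ∑ x, pr p X x * (-Real.log (b x)) = -∑ x, pr p X x * Real.log (b x) := by
    rw [← Finset.sum_neg_distrib]
    exact Finset.sum_congr rfl fun x _ => by ring
  rw [hent, hrhs]
  linarith

lemma ent_const [Fintype α] [DecidableEq α] (hp1 : ∑ ω, p ω = 1) (c : α) :
    ent p (fun _ => c) = 0 := by
  unfold ent pr
  refine Finset.sum_eq_zero fun x _ => ?_
  by_cases h : c = x
  · simp [h, hp1, Real.negMulLog]
  · simp [h, Real.negMulLog]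





lemma ent_assoc [Fintype α] [DecidableEq α] [Fintype β] [DecidableEq β]
    [Fintype γ] [DecidableEq γ] (A : Ω → α) (B : Ω → β) (C : Ω → γ) :
    ent p (fun ω => ((A ω, B ω), C ω)) = ent p (fun ω => (A ω, B ω, C ω)) :=
  ent_congr p _ _ (fun w => (w.1.1, w.1.2, w.2)) (fun w => ((w.1, w.2.1), w.2.2))
    (fun _ => rfl) (fun _ => rfl)

lemma ent_swap [Fintype α] [DecidableEq α] [Fintype β] [DecidableEq β]
    (A : Ω → α) (B : Ω → β) :
    ent p (fun ω => (A ω, B ω)) = ent p (fun ω => (B ω, A ω)) :=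
  ent_congr p _ _ (fun w => (w.2, w.1)) (fun w => (w.2, w.1)) (fun _ => rfl) (fun _ => rfl)

lemma ent_perm1 [Fintype α] [DecidableEq α] [Fintype β] [DecidableEq β]
    [Fintype γ] [DecidableEq γ] (A : Ω → α) (B : Ω → β) (C : Ω → γ) :
    ent p (fun ω => (A ω, B ω, C ω)) = ent p (fun ω => ((A ω, C ω), B ω)) :=
  ent_congr p _ _ (fun w => ((w.1, w.2.2), w.2.1)) (fun w => (w.1.1, w.2, w.1.2))
    (fun _ => rfl) (fun _ => rfl)

lemma ent_perm2 [Fintype α] [DecidableEq α] [Fintype β] [DecidableEq β]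
    [Fintype γ] [DecidableEq γ] (A : Ω → α) (B : Ω → β) (C : Ω → γ) :
    ent p (fun ω => (A ω, B ω, C ω)) = ent p (fun ω => ((C ω, A ω), B ω)) :=
  ent_congr p _ _ (fun w => ((w.2.2, w.1), w.2.1)) (fun w => (w.1.2, w.2, w.1.1))
    (fun _ => rfl) (fun _ => rfl)





theorem mi_chain_bound {τ ζ : Type*} [Fintype τ] [DecidableEq τ]
    [Fintype ζ] [DecidableEq ζ] (p : Ω → ℝ) (hp : ∀ ω, 0 ≤ p ω) (hp1 : ∑ ω, p ω = 1)
    {n : ℕ} (C : ℝ) (T : Fin n → Ω → τ) (Z : Fin n → Ω → ζ)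
    (hmem : ∀ i : Fin n, CondIndep p
        (fun ω => ((fun j : Fin n => if j = i then none else some (T j ω)),
          (fun j : Fin n => if j < i then some (Z j ω) else none)))
        (T i) (Z i))
    (hC : ∀ i : Fin n, mi p (T i) (Z i) ≤ C) (τd : τ) (ζd : ζ) :
    mi p (fun ω (j : Fin n) => T j ω) (fun ω (j : Fin n) => Z j ω) ≤ n * C := by
  have main : ∀ i : ℕ, i ≤ n → mi p (fun ω (j : Fin n) => T j ω) (Sv Z i) ≤ i * C := by
    intro i
    induction i with
    | zero =>
      intro _
      have e1 : ent p (Sv Z 0) = ent p (fun _ : Ω => (fun _ : Fin n => (none : Option ζ))) :=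
        ent_congr p _ _ (fun _ => (fun _ => none)) (fun y => y)
          (fun ω => rfl) (fun ω => by funext j; simp [Sv])
      have e2 : ent p (fun _ : Ω => (fun _ : Fin n => (none : Option ζ))) = 0 :=
        ent_const p hp1 _
      have e3 : ent p (fun ω => ((fun j : Fin n => T j ω), Sv Z 0 ω))
          = ent p (fun ω (j : Fin n) => T j ω) :=
        ent_congr p _ _ Prod.fst (fun t => (t, fun _ => none)) (fun ω => rfl)
          (fun ω => by
            rw [show Sv Z 0 ω = (fun _ : Fin n => (none : Option ζ)) from
              funext fun j => by simp [Sv]])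
      simp only [mi]
      rw [e1, e2, e3]
      simp
    | succ i ih =>
      intro hi1
      have hi : i < n := hi1
      have ihv := ih (le_of_lt hi)
      -- pointwise maps between Sv Z (i+1) and (Sv Z i, Z ⟨i,hi⟩)
      have hgpt : ∀ ω, (Sv Z i ω, Z ⟨i, hi⟩ ω)
          = ((fun j : Fin n => if (j : ℕ) < i then Sv Z (i+1) ω j else none),
             (Sv Z (i+1) ω ⟨i, hi⟩).getD ζd) := by
        intro ω
        refine Prod.ext ?_ ?_
        · funext j
          by_cases hj : (j : ℕ) < i
          · simp [Sv, hj, Nat.lt_succ_of_lt hj]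
          · simp [Sv, hj]
        · simp [Sv]
      have hhpt : ∀ ω, Sv Z (i+1) ω
          = (fun j : Fin n => if (j : ℕ) = i then some (Z ⟨i, hi⟩ ω) else Sv Z i ω j) := by
        intro ω
        funext j
        by_cases hj : (j : ℕ) = i
        · have hj' : j = ⟨i, hi⟩ := Fin.ext hj
          rw [hj']
          simp [Sv]
        · by_cases hj2 : (j : ℕ) < i
          · simp [Sv, hj, hj2, Nat.lt_succ_of_lt hj2]
          · have hj3 : ¬ (j : ℕ) < i + 1 := by omega
            simp [Sv, hj, hj2, hj3]
      have c1 : ent p (Sv Z (i+1)) = ent p (fun ω => (Sv Z i ω, Z ⟨i, hi⟩ ω)) :=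
        ent_congr p _ _
          (fun s => ((fun j : Fin n => if (j : ℕ) < i then s j else none),
            (s ⟨i, hi⟩).getD ζd))
          (fun q => (fun j : Fin n => if (j : ℕ) = i then some q.2 else q.1 j))
          (fun ω => hgpt ω) (fun ω => hhpt ω)
      have c2 : ent p (fun ω => ((fun j : Fin n => T j ω), Sv Z (i+1) ω))
          = ent p (fun ω => ((fun j : Fin n => T j ω), (Sv Z i ω, Z ⟨i, hi⟩ ω))) :=
        ent_congr p _ _
          (fun w => (w.1, ((fun j : Fin n => if (j : ℕ) < i then w.2 j else none),
            (w.2 ⟨i, hi⟩).getD ζd)))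
          (fun w => (w.1, (fun j : Fin n => if (j : ℕ) = i then some w.2.2 else w.2.1 j)))
          (fun ω => Prod.ext rfl (hgpt ω)) (fun ω => Prod.ext rfl (hhpt ω))
      -- c3 : chain inequality
      have q1t := ent_pair_le_add p hp hp1 (Sv Z i) (Z ⟨i, hi⟩)
      have q1 : ent p (fun ω => (Sv Z i ω, Z ⟨i, hi⟩ ω))
          ≤ ent p (Sv Z i) + ent p (Z ⟨i, hi⟩) := q1t
      have q2t := ent_assoc p (fun ω (j : Fin n) => T j ω) (Sv Z i) (Z ⟨i, hi⟩)
      have q2 : ent p (fun ω => (((fun j : Fin n => T j ω), Sv Z i ω), Z ⟨i, hi⟩ ω))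
          = ent p (fun ω => ((fun j : Fin n => T j ω), (Sv Z i ω, Z ⟨i, hi⟩ ω))) := q2t
      -- c4 : relabel (Tf, Sv i) ↔ (U1, T ii)
      have hgU : ∀ ω, ((((fun j : Fin n => if j = ⟨i, hi⟩ then none else some (T j ω)),
            (fun j : Fin n => if j < ⟨i, hi⟩ then some (Z j ω) else none))), T ⟨i, hi⟩ ω)
          = ((((fun j : Fin n => if j = ⟨i, hi⟩ then none else some (T j ω)),
            (fun j : Fin n => if j < ⟨i, hi⟩ then Sv Z i ω j else none))), T ⟨i, hi⟩ ω) := by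
        intro ω
        refine Prod.ext (Prod.ext rfl ?_) rfl
        funext j
        by_cases hj : j < (⟨i, hi⟩ : Fin n)
        · have hj' : (j : ℕ) < i := hj
          simp [Sv, hj, hj']
        · simp [hj]
      have hhU : ∀ ω, ((fun j : Fin n => T j ω), Sv Z i ω)
          = ((fun j : Fin n => if j = ⟨i, hi⟩ then T ⟨i, hi⟩ ω
                else ((if j = ⟨i, hi⟩ then none else some (T j ω)).getD τd)),
             (fun j : Fin n => if (j : ℕ) < i
                then (if j < ⟨i, hi⟩ then some (Z j ω) else none) else none)) := by
        intro ω
        refine Prod.ext ?_ ?_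
        · funext j
          by_cases hj : j = ⟨i, hi⟩
          · rw [hj]; simp
          · simp [hj]
        · funext j
          by_cases hj : (j : ℕ) < i
          · have hj' : j < (⟨i, hi⟩ : Fin n) := hj
            simp [Sv, hj, hj']
          · simp [Sv, hj]
      have d1 : ent p (fun ω => ((fun j : Fin n => T j ω), Sv Z i ω))
          = ent p (fun ω => (((fun j : Fin n => if j = ⟨i, hi⟩ then none else some (T j ω)),
              (fun j : Fin n => if j < ⟨i, hi⟩ then some (Z j ω) else none)), T ⟨i, hi⟩ ω)) :=
        ent_congr p _ _
          (fun w => (((fun j : Fin n => if j = ⟨i, hi⟩ then none else some (w.1 j)),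
            (fun j : Fin n => if j < ⟨i, hi⟩ then w.2 j else none)), w.1 ⟨i, hi⟩))
          (fun u => ((fun j : Fin n => if j = ⟨i, hi⟩ then u.2 else ((u.1.1 j).getD τd)),
            (fun j : Fin n => if (j : ℕ) < i then u.1.2 j else none)))
          (fun ω => hgU ω) (fun ω => hhU ω)
      have d2 : ent p (fun ω => (((fun j : Fin n => T j ω), Sv Z i ω), Z ⟨i, hi⟩ ω))
          = ent p (fun ω => ((((fun j : Fin n => if j = ⟨i, hi⟩ then none else some (T j ω)),
              (fun j : Fin n => if j < ⟨i, hi⟩ then some (Z j ω) else none)), T ⟨i, hi⟩ ω),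
              Z ⟨i, hi⟩ ω)) :=
        ent_congr p _ _
          (fun w => ((((fun j : Fin n => if j = ⟨i, hi⟩ then none else some (w.1.1 j)),
            (fun j : Fin n => if j < ⟨i, hi⟩ then w.1.2 j else none)), w.1.1 ⟨i, hi⟩), w.2))
          (fun u => (((fun j : Fin n => if j = ⟨i, hi⟩ then u.1.2 else ((u.1.1.1 j).getD τd)),
            (fun j : Fin n => if (j : ℕ) < i then u.1.1.2 j else none)), u.2))
          (fun ω => Prod.ext (hgU ω) rfl)
          (fun ω => Prod.ext (hhU ω) rfl)
      -- condIndep step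
      have hce0 := condIndep_ent p hp
        (fun ω => ((fun j : Fin n => if j = (⟨i, hi⟩ : Fin n) then none else some (T j ω)),
          (fun j : Fin n => if j < (⟨i, hi⟩ : Fin n) then some (Z j ω) else none)))
        (T ⟨i, hi⟩) (Z ⟨i, hi⟩) (hmem ⟨i, hi⟩)
      have hce : ent p (fun ω => (((fun j : Fin n => if j = ⟨i, hi⟩ then none else some (T j ω)),
              (fun j : Fin n => if j < ⟨i, hi⟩ then some (Z j ω) else none)),
              T ⟨i, hi⟩ ω, Z ⟨i, hi⟩ ω)) + ent p (T ⟨i, hi⟩)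
          = ent p (fun ω => (((fun j : Fin n => if j = ⟨i, hi⟩ then none else some (T j ω)),
              (fun j : Fin n => if j < ⟨i, hi⟩ then some (Z j ω) else none)),
              T ⟨i, hi⟩ ω))
            + ent p (fun ω => (T ⟨i, hi⟩ ω, Z ⟨i, hi⟩ ω)) := hce0
      have hash0 := ent_assoc p
        (fun ω => ((fun j : Fin n => if j = (⟨i, hi⟩ : Fin n) then none else some (T j ω)),
          (fun j : Fin n => if j < (⟨i, hi⟩ : Fin n) then some (Z j ω) else none)))
        (T ⟨i, hi⟩) (Z ⟨i, hi⟩)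
      have hash : ent p (fun ω => ((((fun j : Fin n => if j = ⟨i, hi⟩ then none
                else some (T j ω)),
              (fun j : Fin n => if j < ⟨i, hi⟩ then some (Z j ω) else none)),
              T ⟨i, hi⟩ ω), Z ⟨i, hi⟩ ω))
          = ent p (fun ω => (((fun j : Fin n => if j = ⟨i, hi⟩ then none else some (T j ω)),
              (fun j : Fin n => if j < ⟨i, hi⟩ then some (Z j ω) else none)),
              T ⟨i, hi⟩ ω, Z ⟨i, hi⟩ ω)) := hash0
      have hCi := hC ⟨i, hi⟩
      simp only [mi] at ihv hCi ⊢
      rw [c1, c2]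
      push_cast
      linarith [q1, q2, d1, d2, hce, hash, ihv, hCi]
  have hfin := main n le_rfl
  have eg : ∀ ω : Ω, (fun j : Fin n => Z j ω) = (fun j : Fin n => (Sv Z n ω j).getD ζd) := by
    intro ω; funext j; simp [Sv, j.isLt]
  have eh : ∀ ω : Ω, Sv Z n ω = (fun j : Fin n => some (Z j ω)) := by
    intro ω; funext j; simp [Sv, j.isLt]
  have e1 : ent p (Sv Z n) = ent p (fun ω (j : Fin n) => Z j ω) :=
    ent_congr p _ _ (fun s (j : Fin n) => (s j).getD ζd) (fun z (j : Fin n) => some (z j))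
      (fun ω => eg ω) (fun ω => eh ω)
  have e2 : ent p (fun ω => ((fun j : Fin n => T j ω), Sv Z n ω))
      = ent p (fun ω => ((fun j : Fin n => T j ω), (fun j : Fin n => Z j ω))) :=
    ent_congr p _ _ (fun w => (w.1, fun j : Fin n => (w.2 j).getD ζd))
      (fun w => (w.1, fun j : Fin n => some (w.2 j)))
      (fun ω => Prod.ext rfl (eg ω)) (fun ω => Prod.ext rfl (eh ω))
  simp only [mi] at hfin ⊢
  rw [e1, e2] at hfin
  exact hfin





theorem fano_bound {β' κ : Type*} [Fintype β'] [DecidableEq β'] [Fintype κ] [DecidableEq κ]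
    (p : Ω → ℝ) (hp : ∀ ω, 0 ≤ p ω) (hp1 : ∑ ω, p ω = 1)
    (V : Ω → β') (K L : Ω → κ) (Ψ : β' → κ) (hΨ : ∀ ω, L ω = Ψ (V ω)) :
    ent p (fun ω => (K ω, V ω)) - ent p V
      ≤ ent p (fun ω => if K ω = L ω then (none : Option κ) else some (K ω)) := by
  have s1t := ent_comp_le p hp (fun w : κ × Option κ × β' => (w.1, w.2.2))
    (fun ω => (K ω, (if K ω = L ω then (none : Option κ) else some (K ω)), V ω))
  have s1 : ent p (fun ω => (K ω, V ω))
      ≤ ent p (fun ω => (K ω, (if K ω = L ω then (none : Option κ) else some (K ω)), V ω)) := s1t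
  have s2 : ent p (fun ω => (K ω, (if K ω = L ω then (none : Option κ) else some (K ω)), V ω))
      = ent p (fun ω => ((if K ω = L ω then (none : Option κ) else some (K ω)), V ω)) :=
    ent_congr p _ _ (fun w => w.2) (fun q => ((q.1).getD (Ψ q.2), q.1, q.2))
      (fun ω => rfl)
      (fun ω => by
        refine Prod.ext ?_ rfl
        by_cases hc : K ω = L ω
        · simp only [hc, if_pos rfl]
          show L ω = (Option.getD none (Ψ (V ω)))
          simp [hΨ ω]
        · simp [hc])
  have s3t := ent_pair_le_add p hp hp1
    (fun ω => if K ω = L ω then (none : Option κ) else some (K ω)) V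
  have s3 : ent p (fun ω => ((if K ω = L ω then (none : Option κ) else some (K ω)), V ω))
      ≤ ent p (fun ω => if K ω = L ω then (none : Option κ) else some (K ω)) + ent p V := s3t
  linarith

theorem entM_bound {κ : Type*} [Fintype κ] [DecidableEq κ]
    (p : Ω → ℝ) (hp : ∀ ω, 0 ≤ p ω) (hp1 : ∑ ω, p ω = 1)
    (K L : Ω → κ) (hκ : Nonempty κ) :
    ent p (fun ω => if K ω = L ω then (none : Option κ) else some (K ω))
      ≤ Real.log 2 + (∑ ω, if K ω ≠ L ω then p ω else 0) * Real.log (Fintype.card κ) := by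
  have hN : (0 : ℝ) < Fintype.card κ := by
    exact_mod_cast Fintype.card_pos_iff.mpr hκ
  set M : Ω → Option κ := fun ω => if K ω = L ω then (none : Option κ) else some (K ω) with hM
  set b : Option κ → ℝ := fun v => v.elim (1/2 : ℝ) (fun _ => 1/(2 * Fintype.card κ)) with hb
  have hbpos : ∀ v, 0 < b v := by
    intro v
    rcases v with _ | k
    · rw [hb]; norm_num
    · rw [hb]; simp only [Option.elim]; positivity
  have hsb : ∑ v : Option κ, b v = 1 := by
    rw [hb, Fintype.sum_option]
    simp only [Option.elim]
    rw [Finset.sum_const, Finset.card_univ, nsmul_eq_mul]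
    field_simp
    ring
  have hcross := ent_le_cross p hp hp1 M b hbpos (le_of_eq hsb)
  have hlog2 : -Real.log (b none) = Real.log 2 := by
    rw [hb]; simp only [Option.elim]
    rw [one_div, Real.log_inv]; ring
  have hlogsome : ∀ k : κ, -Real.log (b (some k)) = Real.log 2 + Real.log (Fintype.card κ) := by
    intro k
    rw [hb]; simp only [Option.elim]
    rw [one_div, Real.log_inv, Real.log_mul (by norm_num) hN.ne']
    ring
  have hsplit : ∑ v : Option κ, pr p M v * (-Real.log (b v))
      = pr p M none * Real.log 2
        + (∑ k : κ, pr p M (some k)) * (Real.log 2 + Real.log (Fintype.card κ)) := by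
    rw [Fintype.sum_option, hlog2, Finset.sum_mul]
    congr 1
    exact Finset.sum_congr rfl fun k _ => by rw [hlogsome k]
  have hsum1 : pr p M none + ∑ k : κ, pr p M (some k) = 1 := by
    have := (sum_pr p M).trans hp1
    rwa [Fintype.sum_option] at this
  have hε : ∑ k : κ, pr p M (some k) = ∑ ω, if K ω ≠ L ω then p ω else 0 := by
    unfold pr
    rw [Finset.sum_comm]
    refine Finset.sum_congr rfl fun ω _ => ?_
    by_cases hc : K ω = L ω
    · simp [hM, hc]
    · simp [hM, hc, Finset.sum_ite_eq']
  have hεnn : 0 ≤ ∑ k : κ, pr p M (some k) :=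
    Finset.sum_nonneg fun k _ => pr_nonneg p hp M (some k)
  rw [hsplit] at hcross
  rw [← hε]
  have hprn : pr p M none = 1 - ∑ k : κ, pr p M (some k) := by linarith
  have hgoal : pr p M none * Real.log 2
      + (∑ k : κ, pr p M (some k)) * (Real.log 2 + Real.log (Fintype.card κ))
      = Real.log 2 + (∑ k : κ, pr p M (some k)) * Real.log (Fintype.card κ) := by
    rw [hprn]; ring
  linarith

theorem stepA {α' κ' β' τ' ζ' : Type*}
    [Fintype α'] [DecidableEq α'] [Fintype κ'] [DecidableEq κ'] [Fintype β'] [DecidableEq β']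
    [Fintype τ'] [DecidableEq τ'] [Fintype ζ'] [DecidableEq ζ']
    (p : Ω → ℝ) (hp : ∀ ω, 0 ≤ p ω) (hp1 : ∑ ω, p ω = 1)
    (Kv : Ω → κ') (Yv : Ω → β') (Zv : Ω → ζ') (Xv : Ω → α') (Tv : Ω → τ')
    (hM : CondIndep p (fun ω => (Xv ω, Kv ω, Yv ω)) Tv Zv) :
    ent p (fun ω => (Kv ω, Yv ω)) - ent p Yv
      ≤ (ent p (fun ω => (Kv ω, Yv ω, Zv ω)) - ent p (fun ω => (Yv ω, Zv ω)))
        + (ent p Tv + ent p Zv - ent p (fun ω => (Tv ω, Zv ω))) := by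
  have m1a : ent p (fun ω => (Yv ω, Zv ω)) ≤ ent p Yv + ent p Zv :=
    ent_pair_le_add p hp hp1 Yv Zv
  have m1b : ent p (fun ω => ((Kv ω, Yv ω), Zv ω)) = ent p (fun ω => (Kv ω, Yv ω, Zv ω)) :=
    ent_assoc p Kv Yv Zv
  have m2a0 := ent_submodular p hp hp1 Xv Zv (fun ω => (Kv ω, Yv ω))
  have m2a : ent p (fun ω => (Xv ω, Zv ω, (Kv ω, Yv ω))) + ent p (fun ω => (Kv ω, Yv ω))
      ≤ ent p (fun ω => (Xv ω, Kv ω, Yv ω)) + ent p (fun ω => (Zv ω, (Kv ω, Yv ω))) := m2a0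
  have m2b0 := ent_perm1 p Xv Zv (fun ω => (Kv ω, Yv ω))
  have m2b : ent p (fun ω => (Xv ω, Zv ω, (Kv ω, Yv ω)))
      = ent p (fun ω => ((Xv ω, Kv ω, Yv ω), Zv ω)) := m2b0
  have m2c0 := ent_swap p Zv (fun ω => (Kv ω, Yv ω))
  have m2c : ent p (fun ω => (Zv ω, (Kv ω, Yv ω)))
      = ent p (fun ω => ((Kv ω, Yv ω), Zv ω)) := m2c0
  have m3a0 := ent_submodular p hp hp1 Tv Zv (fun ω => (Xv ω, Kv ω, Yv ω))
  have m3a : ent p (fun ω => (Tv ω, Zv ω, (Xv ω, Kv ω, Yv ω)))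
        + ent p (fun ω => (Xv ω, Kv ω, Yv ω))
      ≤ ent p (fun ω => (Tv ω, (Xv ω, Kv ω, Yv ω)))
        + ent p (fun ω => (Zv ω, (Xv ω, Kv ω, Yv ω))) := m3a0
  have m3b0 := ent_perm2 p Tv Zv (fun ω => (Xv ω, Kv ω, Yv ω))
  have m3b : ent p (fun ω => (Tv ω, Zv ω, (Xv ω, Kv ω, Yv ω)))
      = ent p (fun ω => (((Xv ω, Kv ω, Yv ω), Tv ω), Zv ω)) := m3b0
  have m3c0 := ent_swap p Tv (fun ω => (Xv ω, Kv ω, Yv ω))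
  have m3c : ent p (fun ω => (Tv ω, (Xv ω, Kv ω, Yv ω)))
      = ent p (fun ω => ((Xv ω, Kv ω, Yv ω), Tv ω)) := m3c0
  have m3d0 := ent_swap p Zv (fun ω => (Xv ω, Kv ω, Yv ω))
  have m3d : ent p (fun ω => (Zv ω, (Xv ω, Kv ω, Yv ω)))
      = ent p (fun ω => ((Xv ω, Kv ω, Yv ω), Zv ω)) := m3d0
  have m40 := condIndep_ent p hp (fun ω => (Xv ω, Kv ω, Yv ω)) Tv Zv hM
  have m4 : ent p (fun ω => ((Xv ω, Kv ω, Yv ω), Tv ω, Zv ω)) + ent p Tv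
      = ent p (fun ω => ((Xv ω, Kv ω, Yv ω), Tv ω)) + ent p (fun ω => (Tv ω, Zv ω)) := m40
  have m4b0 := ent_assoc p (fun ω => (Xv ω, Kv ω, Yv ω)) Tv Zv
  have m4b : ent p (fun ω => (((Xv ω, Kv ω, Yv ω), Tv ω), Zv ω))
      = ent p (fun ω => ((Xv ω, Kv ω, Yv ω), Tv ω, Zv ω)) := m4b0
  linarith


end Aux
end CRG
end

/-- combined converse: if `K = Φ(X^n)`, `L = Ψ(Y^n,Z^n)`,
`Pr[K≠L] ≤ ε`, `|κ| ≤ e^{cn}`, the channel from `T^n` to `Z^n` is memoryless with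
per-letter mutual information at most `C`, and `Y^n — (X^n,K) — T^n — Z^n` is a Markov
chain, then `I(K;X^n) - I(K;Y^n) = H(K) - I(K;Y^n) = H(K|Y^n) ≤ n·C + 1 + ε·c·n`. -/
theorem converse_bound {Ω α β τ ζ κ : Type*} [Fintype Ω]
    [Fintype α] [DecidableEq α] [Fintype β] [DecidableEq β] [Fintype τ] [DecidableEq τ]
    [Fintype ζ] [DecidableEq ζ] [Fintype κ] [DecidableEq κ]
    (p : Ω → ℝ) (hp : ∀ ω, 0 ≤ p ω) (hp1 : ∑ ω, p ω = 1)
    (n : ℕ) (c ε C : ℝ) (hc : 0 ≤ c) (hε1 : ε ≤ 1)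
    (X : Fin n → Ω → α) (Y : Fin n → Ω → β) (T : Fin n → Ω → τ) (Z : Fin n → Ω → ζ)
    (K L : Ω → κ)
    (hK : ∃ Φ : (Fin n → α) → κ, ∀ ω, K ω = Φ (fun j => X j ω))
    (hL : ∃ Ψ : (Fin n → β) × (Fin n → ζ) → κ,
      ∀ ω, L ω = Ψ ((fun j => Y j ω), (fun j => Z j ω)))
    (herr : (∑ ω, if K ω ≠ L ω then p ω else 0) ≤ ε)
    (hcard : (Fintype.card κ : ℝ) ≤ Real.exp (c * n))
    (hmem : ∀ i : Fin n,
      CondIndep p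
        (fun ω => ((fun j : Fin n => if j = i then none else some (T j ω)),
          (fun j : Fin n => if j < i then some (Z j ω) else none)))
        (T i) (Z i))
    (hC : ∀ i : Fin n, mi p (T i) (Z i) ≤ C)
    (hMarkov1 : CondIndep p (fun ω (j : Fin n) => Y j ω)
      (fun ω => ((fun j : Fin n => X j ω), K ω)) (fun ω (j : Fin n) => T j ω))
    (hMarkov2 : CondIndep p
      (fun ω => ((fun j : Fin n => X j ω), K ω, (fun j : Fin n => Y j ω)))
      (fun ω (j : Fin n) => T j ω) (fun ω (j : Fin n) => Z j ω)) :
    mi p K (fun ω (j : Fin n) => X j ω) - mi p K (fun ω (j : Fin n) => Y j ω) =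
      ent p K - mi p K (fun ω (j : Fin n) => Y j ω) ∧
    ent p K - mi p K (fun ω (j : Fin n) => Y j ω) =
      condEnt p K (fun ω (j : Fin n) => Y j ω) ∧
    condEnt p K (fun ω (j : Fin n) => Y j ω) ≤ n * C + 1 + ε * c * n := by
  classical
  obtain ⟨Φ, hΦ⟩ := hK
  obtain ⟨Ψ, hΨ⟩ := hL
  have hKX : ent p (fun ω => (K ω, fun j : Fin n => X j ω))
      = ent p (fun ω (j : Fin n) => X j ω) :=
    CRG.Aux.ent_congr p _ _ Prod.snd (fun x => (Φ x, x)) (fun ω => rfl)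
      (fun ω => by rw [hΦ ω])
  have hnn : 0 ≤ ∑ ω, if K ω ≠ L ω then p ω else 0 :=
    Finset.sum_nonneg fun ω _ => by split <;> simp [hp ω]
  have hε0 : 0 ≤ ε := le_trans hnn herr
  refine ⟨?_, ?_, ?_⟩
  · simp only [mi]
    linarith [hKX]
  · simp only [mi, condEnt]; ring
  · simp only [condEnt]
    rcases Nat.eq_zero_or_pos n with hn0 | hnpos
    · subst hn0
      have hconst : ent p (fun ω => (K ω, fun j : Fin 0 => Y j ω))
          = ent p (fun ω (j : Fin 0) => Y j ω) :=
        CRG.Aux.ent_congr p _ _ Prod.snd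
          (fun y => (Φ (fun j : Fin 0 => j.elim0), y)) (fun ω => rfl)
          (fun ω => by
            refine Prod.ext ?_ rfl
            show K ω = Φ (fun j : Fin 0 => j.elim0)
            rw [hΦ ω]
            exact congrArg Φ (funext fun j => j.elim0))
      rw [hconst]
      push_cast
      nlinarith [hε0]
    · have hΩne : Nonempty Ω := by
        by_contra h
        rw [not_nonempty_iff] at h
        rw [Finset.univ_eq_empty, Finset.sum_empty] at hp1
        exact one_ne_zero hp1.symm
      obtain ⟨ω0⟩ := hΩne
      have hκne : Nonempty κ := ⟨K ω0⟩
      have hcard1 : (1 : ℝ) ≤ Fintype.card κ := by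
        have h1 : 1 ≤ Fintype.card κ := Fintype.card_pos_iff.mpr hκne
        exact_mod_cast h1
      have hlogκ : Real.log (Fintype.card κ) ≤ c * n := by
        rw [Real.log_le_iff_le_exp (by linarith)]
        exact hcard
      have hlogκ0 : 0 ≤ Real.log (Fintype.card κ) := Real.log_nonneg hcard1
      have hA0 := CRG.Aux.stepA p hp hp1 K (fun ω (j : Fin n) => Y j ω)
          (fun ω (j : Fin n) => Z j ω) (fun ω (j : Fin n) => X j ω)
          (fun ω (j : Fin n) => T j ω) hMarkov2
      have hA : ent p (fun ω => (K ω, fun j : Fin n => Y j ω))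
            - ent p (fun ω (j : Fin n) => Y j ω)
          ≤ (ent p (fun ω => (K ω, (fun j : Fin n => Y j ω), (fun j : Fin n => Z j ω)))
              - ent p (fun ω => ((fun j : Fin n => Y j ω), (fun j : Fin n => Z j ω))))
            + (ent p (fun ω (j : Fin n) => T j ω) + ent p (fun ω (j : Fin n) => Z j ω)
              - ent p (fun ω => ((fun j : Fin n => T j ω), (fun j : Fin n => Z j ω)))) := hA0
      have hB0 := CRG.Aux.fano_bound p hp hp1
          (fun ω => ((fun j : Fin n => Y j ω), (fun j : Fin n => Z j ω))) K L Ψ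
          (fun ω => hΨ ω)
      have hB : ent p (fun ω => (K ω, (fun j : Fin n => Y j ω), (fun j : Fin n => Z j ω)))
            - ent p (fun ω => ((fun j : Fin n => Y j ω), (fun j : Fin n => Z j ω)))
          ≤ ent p (fun ω => if K ω = L ω then (none : Option κ) else some (K ω)) := hB0
      have hB2 := CRG.Aux.entM_bound p hp hp1 K L hκne
      have hC0 := CRG.Aux.mi_chain_bound p hp hp1 C T Z hmem hC
          (T ⟨0, hnpos⟩ ω0) (Z ⟨0, hnpos⟩ ω0)
      have hC1 : ent p (fun ω (j : Fin n) => T j ω) + ent p (fun ω (j : Fin n) => Z j ω)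
          - ent p (fun ω => ((fun j : Fin n => T j ω), (fun j : Fin n => Z j ω)))
          ≤ n * C := by
        simp only [mi] at hC0
        exact hC0
      have hlt2 : Real.log 2 < 1 := by
        have := Real.log_two_lt_d9; linarith
      have hmul : (∑ ω, if K ω ≠ L ω then p ω else 0) * Real.log (Fintype.card κ)
          ≤ ε * (c * n) :=
        le_trans (mul_le_mul_of_nonneg_right herr hlogκ0)
          (mul_le_mul_of_nonneg_left hlogκ hε0)
      have hassoc : ε * c * (n : ℝ) = ε * (c * (n : ℝ)) := mul_assoc ε c n
      linarith [hA, hB, hB2, hC1, hmul, hlt2, hassoc]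
end

section
/- Euclidean projection onto the probability simplex: given z ∈ ℝ^D, let w be z sorted in decreasing order, γ = max{ 1 ≤ j ≤ D : w_j + (1 − Σ_{i=1}^j w_i)/j > 0 }, and κ = (1/γ)·(1 − Σ_{i=1}^γ w_i). Then the vector θ with θ_i = max{z_i + κ, 0} is the unique minimizer of ||θ − z||₂ over the probability simplex {θ ∈ ℝ^D : θ ≥ 0, Σ_i θ_i = 1}. -/
open Real Finset

/-- Euclidean projection onto the probability simplex: given
`z ∈ ℝ^D`, let `w` be `z` sorted in decreasing order (via a permutation `e`), let
`γ ∈ {1,…,D}` (here `γ = g.1 + 1` for `g : Fin D`) be the largest index `j` such that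
`w_j + (1 − ∑_{i=1}^j w_i)/j > 0`, and let `κ = (1/γ)·(1 − ∑_{i=1}^γ w_i)`. Then `θ`
with `θ_i = max (z_i + κ) 0` is the unique minimizer of `‖θ − z‖₂` over the probability
simplex `{θ : θ ≥ 0, ∑ θ_i = 1}`. -/
theorem projection_onto_simplex (D : ℕ) (hD : 1 ≤ D) (z : Fin D → ℝ)
    (e : Equiv.Perm (Fin D)) (w : Fin D → ℝ) (hw : ∀ i, w i = z (e i))
    (hsort : ∀ i j : Fin D, i ≤ j → w j ≤ w i)
    (g : Fin D)
    (hg : 0 < w g + (1 - ∑ i ∈ Finset.univ.filter (· ≤ g), w i) / (g.1 + 1 : ℝ))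
    (hgmax : ∀ j : Fin D,
      0 < w j + (1 - ∑ i ∈ Finset.univ.filter (· ≤ j), w i) / (j.1 + 1 : ℝ) → j ≤ g) :
    (∀ i, 0 ≤ max (z i + (1 - ∑ i ∈ Finset.univ.filter (· ≤ g), w i) / (g.1 + 1 : ℝ)) 0) ∧
    (∑ i, max (z i + (1 - ∑ i ∈ Finset.univ.filter (· ≤ g), w i) / (g.1 + 1 : ℝ)) 0) = 1 ∧
    (∀ θ' : Fin D → ℝ, (∀ i, 0 ≤ θ' i) → (∑ i, θ' i) = 1 →
      Real.sqrt (∑ i, (max (z i + (1 - ∑ i ∈ Finset.univ.filter (· ≤ g), w i) /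
            (g.1 + 1 : ℝ)) 0 - z i) ^ 2) ≤
        Real.sqrt (∑ i, (θ' i - z i) ^ 2)) ∧
    (∀ θ' : Fin D → ℝ, (∀ i, 0 ≤ θ' i) → (∑ i, θ' i) = 1 →
      Real.sqrt (∑ i, (θ' i - z i) ^ 2) =
        Real.sqrt (∑ i, (max (z i + (1 - ∑ i ∈ Finset.univ.filter (· ≤ g), w i) /
            (g.1 + 1 : ℝ)) 0 - z i) ^ 2) →
      θ' = fun i => max (z i + (1 - ∑ i ∈ Finset.univ.filter (· ≤ g), w i) /
            (g.1 + 1 : ℝ)) 0) := by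
  set S : Fin D → ℝ := fun j => ∑ i ∈ Finset.univ.filter (· ≤ j), w i with hS
  set κ : ℝ := (1 - S g) / (g.1 + 1 : ℝ) with hκ
  set K : Fin D → ℝ := fun j => (1 - S j) / (j.1 + 1 : ℝ) with hK
  have hKg : K g = κ := rfl
  -- contrapositive of hgmax
  have hneg : ∀ j : Fin D, g < j → w j + K j ≤ 0 := by
    intro j hj
    by_contra h
    push_neg at h
    exact absurd (hgmax j h) (not_le.2 hj)
  -- sum splitting
  have hsplit : ∀ j j' : Fin D, j'.1 + 1 = j.1 → S j = S j' + w j := by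
    intro j j' hjj
    have h1 : Finset.univ.filter (· ≤ j) = insert j (Finset.univ.filter (· ≤ j')) := by
      ext i
      simp only [Finset.mem_insert, Finset.mem_filter, Finset.mem_univ, true_and]
      constructor
      · intro hi
        rcases eq_or_lt_of_le hi with h | h
        · exact Or.inl (Fin.ext (Fin.val_eq_of_eq h))
        · right; rw [Fin.le_def]; rw [Fin.lt_def] at h; omega
      · rintro (rfl | hi)
        · exact le_refl _
        · rw [Fin.le_def] at hi ⊢; omega
    have h2 : j ∉ Finset.univ.filter (· ≤ j') := by
      simp only [Finset.mem_filter, Finset.mem_univ, true_and]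
      rw [Fin.le_def]; omega
    simp only [hS]
    rw [h1, Finset.sum_insert h2]
    ring
  -- monotonicity of K above g, and the key nonpositivity
  have hmain : ∀ n : ℕ, ∀ j : Fin D, j.1 = g.1 + n → K g ≤ K j ∧ (0 < n → w j + K g ≤ 0) := by
    intro n
    induction n with
    | zero =>
      intro j hj
      have : j = g := Fin.ext (by omega)
      subst this
      exact ⟨le_refl _, fun h => absurd h (lt_irrefl 0)⟩
    | succ n ih =>
      intro j hj
      have hj'lt : g.1 + n < D := by have := j.2; omega
      set j' : Fin D := ⟨g.1 + n, hj'lt⟩ with hj'def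
      have hIH := (ih j' rfl).1
      have hgj : g < j := by rw [Fin.lt_def]; omega
      have hne := hneg j hgj
      have hSj : S j = S j' + w j := hsplit j j' (by simp [hj'def]; omega)
      have hjpos : (0:ℝ) < (j.1 + 1 : ℝ) := by positivity
      have hj1pos : (0:ℝ) < (j.1 : ℝ) := by
        have : 0 < j.1 := by omega
        exact_mod_cast this
      have hcast : ((j'.1 : ℝ) + 1) = (j.1 : ℝ) := by
        simp only [hj'def]
        push_cast [hj]
        ring
      have hA : (j.1 : ℝ) * w j + (1 - S j') ≤ 0 := by
        rw [hK] at hne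
        simp only at hne
        have h3 : (w j + (1 - S j) / ((j.1:ℝ) + 1)) * ((j.1:ℝ) + 1) ≤ 0 :=
          mul_nonpos_of_nonpos_of_nonneg hne hjpos.le
        rw [add_mul, div_mul_cancel₀ _ (ne_of_gt hjpos)] at h3
        rw [hSj] at h3
        nlinarith [h3]
      have hKj : K j' ≤ K j := by
        rw [hK]
        simp only
        rw [div_le_div_iff₀ (by rw [hcast]; exact hj1pos) hjpos, hcast, hSj]
        nlinarith [hA]
      have hwj : w j + K j' ≤ 0 := by
        have h5 : (1 - S j') / ((j'.1:ℝ) + 1) ≤ -w j := by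
          rw [hcast, div_le_iff₀ hj1pos]
          nlinarith [hA]
        have : K j' = (1 - S j') / ((j'.1:ℝ) + 1) := rfl
        rw [this]
        linarith
      exact ⟨hIH.trans hKj, fun _ => by linarith⟩
  have hnonpos : ∀ j : Fin D, ¬ j ≤ g → w j + κ ≤ 0 := by
    intro j hj
    rw [Fin.le_def, not_le] at hj
    have := (hmain (j.1 - g.1) j (by omega)).2 (by omega)
    rwa [hKg] at this
  have hpos : ∀ j : Fin D, j ≤ g → 0 < w j + κ := by
    intro j hj
    have := hsort j g hj
    linarith
  have hzw : ∀ i, z i = w (e.symm i) := fun i => by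
    rw [hw (e.symm i), Equiv.apply_symm_apply]
  have hgpos : (0:ℝ) < (g.1 + 1 : ℝ) := by positivity
  -- sum equals one
  have hsum1 : (∑ i, max (z i + κ) 0) = 1 := by
    have h1 : (∑ i, max (z i + κ) 0) = ∑ j, max (w j + κ) 0 := by
      rw [← Equiv.sum_comp e (fun i => max (z i + κ) 0)]
      exact Finset.sum_congr rfl fun j _ => by rw [hw j]
    rw [h1, ← Finset.sum_filter_add_sum_filter_not Finset.univ (· ≤ g)]
    have h2 : ∑ j ∈ Finset.univ.filter (· ≤ g), max (w j + κ) 0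
        = ∑ j ∈ Finset.univ.filter (· ≤ g), (w j + κ) := by
      refine Finset.sum_congr rfl fun j hj => ?_
      simp only [Finset.mem_filter, Finset.mem_univ, true_and] at hj
      exact max_eq_left (hpos j hj).le
    have h3 : ∑ j ∈ Finset.univ.filter (fun j => ¬ j ≤ g), max (w j + κ) 0 = 0 := by
      refine Finset.sum_eq_zero fun j hj => ?_
      simp only [Finset.mem_filter, Finset.mem_univ, true_and] at hj
      exact max_eq_right (hnonpos j hj)
    rw [h2, h3, add_zero, Finset.sum_add_distrib, Finset.sum_const]
    have hcard : (Finset.univ.filter (· ≤ g)).card = g.1 + 1 := by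
      have : Finset.univ.filter (· ≤ g) = Finset.Iic g := by ext i; simp
      rw [this, Fin.card_Iic]
    rw [hcard, nsmul_eq_mul]
    have hSg : (∑ j ∈ Finset.univ.filter (· ≤ g), w j) = S g := rfl
    rw [hSg, hκ]
    push_cast
    field_simp
    ring
  -- pointwise key inequality
  have hkey : ∀ (θ' : Fin D → ℝ), (∀ i, 0 ≤ θ' i) → ∀ i,
      κ * (θ' i - max (z i + κ) 0) ≤ (θ' i - max (z i + κ) 0) * (max (z i + κ) 0 - z i) := by
    intro θ' hθ' i
    by_cases hc : e.symm i ≤ g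
    · have h1 : 0 ≤ z i + κ := by rw [hzw i]; exact (hpos _ hc).le
      rw [max_eq_left h1]
      exact le_of_eq (by ring)
    · have h1 : z i + κ ≤ 0 := by rw [hzw i]; exact hnonpos _ hc
      rw [max_eq_right h1]
      have h2 := hθ' i
      nlinarith [h1, h2]
  have hcross : ∀ (θ' : Fin D → ℝ), (∀ i, 0 ≤ θ' i) → (∑ i, θ' i) = 1 →
      0 ≤ ∑ i, (θ' i - max (z i + κ) 0) * (max (z i + κ) 0 - z i) := by
    intro θ' h0 h1
    have h2 : ∑ i, κ * (θ' i - max (z i + κ) 0) = 0 := by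
      rw [← Finset.mul_sum, Finset.sum_sub_distrib, h1, hsum1]
      ring
    calc (0:ℝ) = ∑ i, κ * (θ' i - max (z i + κ) 0) := h2.symm
      _ ≤ _ := Finset.sum_le_sum fun i _ => hkey θ' h0 i
  have hle : ∀ (θ' : Fin D → ℝ), (∀ i, 0 ≤ θ' i) → (∑ i, θ' i) = 1 →
      (∑ i, (max (z i + κ) 0 - z i) ^ 2) + ∑ i, (θ' i - max (z i + κ) 0) ^ 2
        ≤ ∑ i, (θ' i - z i) ^ 2 := by
    intro θ' h0 h1
    have hid : ∑ i, (θ' i - z i) ^ 2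
        = (∑ i, (max (z i + κ) 0 - z i) ^ 2) + (∑ i, (θ' i - max (z i + κ) 0) ^ 2)
          + 2 * ∑ i, (θ' i - max (z i + κ) 0) * (max (z i + κ) 0 - z i) := by
      rw [← Finset.sum_add_distrib, Finset.mul_sum, ← Finset.sum_add_distrib]
      exact Finset.sum_congr rfl fun i _ => by ring
    linarith [hcross θ' h0 h1]
  refine ⟨fun i => le_max_right _ _, hsum1, ?_, ?_⟩
  · intro θ' h0 h1
    apply Real.sqrt_le_sqrt
    have h2 := hle θ' h0 h1
    have h3 : 0 ≤ ∑ i, (θ' i - max (z i + κ) 0) ^ 2 :=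
      Finset.sum_nonneg fun i _ => sq_nonneg _
    linarith
  · intro θ' h0 h1 heq
    have hA : 0 ≤ ∑ i, (θ' i - z i) ^ 2 := Finset.sum_nonneg fun i _ => sq_nonneg _
    have hB : 0 ≤ ∑ i, (max (z i + κ) 0 - z i) ^ 2 := Finset.sum_nonneg fun i _ => sq_nonneg _
    have heq2 : ∑ i, (θ' i - z i) ^ 2 = ∑ i, (max (z i + κ) 0 - z i) ^ 2 := by
      have h4 := congrArg (fun x => x ^ 2) heq
      simpa [Real.sq_sqrt hA, Real.sq_sqrt hB] using h4
    have h3 := hle θ' h0 h1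
    have hnn : 0 ≤ ∑ i, (θ' i - max (z i + κ) 0) ^ 2 :=
      Finset.sum_nonneg fun i _ => sq_nonneg _
    have h4 : ∑ i, (θ' i - max (z i + κ) 0) ^ 2 = 0 := le_antisymm (by linarith) hnn
    have h5 := (Finset.sum_eq_zero_iff_of_nonneg (fun i _ => sq_nonneg
      (θ' i - max (z i + κ) 0))).1 h4
    funext i
    have h6 := h5 i (Finset.mem_univ i)
    have h7 : θ' i - max (z i + κ) 0 = 0 := by
      exact pow_eq_zero_iff (by norm_num) |>.1 h6
    simpa [sub_eq_zero] using h7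
end
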